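/- arXiv:1605.03836 — 3 statements merged into one kernel-verified Lean document; each statement's English description precedes it below -/
import Mathlib

section
/- Let L̃ be a weighted graph, let m ≥ 1, and let I₁,…,I_r be multisets of at most m vertices of L̃. Let π = {π₁,…,π_s} be a partition of the multiset I₁ ⊎ ⋯ ⊎ I_r such that π ∨ {I₁,…,I_r} = {I₁ ⊎ ⋯ ⊎ I_r} (the one-block partition). Then Π_{i=1}^{s} M(L̃[π_i]) ≤ M(L̃^m[{I₁,…,I_r}]), where L̃^m is the m-th power of L̃. -/
open MeasureTheory ProbabilityTheory Filter

noncomputable section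

namespace WDGpaper

/-- The joint cumulant of a finite family of real random variables, defined through
the moment-cumulant formula over set partitions. -/
noncomputable def jointCumulant {Ω : Type*} [MeasurableSpace Ω] (μ : Measure Ω)
    {r : ℕ} (X : Fin r → Ω → ℝ) : ℝ :=
  ∑ π : Finpartition (Finset.univ : Finset (Fin r)),
    (-1 : ℝ) ^ (π.parts.card - 1) * (Nat.factorial (π.parts.card - 1) : ℝ) *
      ∏ B ∈ π.parts, ∫ ω, ∏ i ∈ B, X i ω ∂μ

/-- Symmetrized weight function on unordered pairs, from a function on ordered pairs. -/
noncomputable def edgeWeight {V : Type*} (w : V → V → ℝ) : Sym2 V → ℝ :=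
  Sym2.lift ⟨fun a b => max (w a b) (w b a), fun _ _ => max_comm _ _⟩

/-- `T` is (the edge set of) a spanning tree of the complete graph on `V`. -/
def IsSpanningTree (V : Type*) [Fintype V] [DecidableEq V] (T : Finset (Sym2 V)) : Prop :=
  (∀ e ∈ T, ¬ e.IsDiag) ∧ (SimpleGraph.fromEdgeSet (↑T : Set (Sym2 V))).Connected ∧
    T.card + 1 = Fintype.card V

/-- The maximal weight (product of edge weights) of a spanning tree of the weighted
graph with vertex set `V` and weight function `w`; it equals `0` (the `sSup` of the
empty set) when the weighted graph has no spanning tree, i.e. is disconnected. -/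
noncomputable def treeMax {V : Type*} [Fintype V] [DecidableEq V] (w : V → V → ℝ) : ℝ :=
  sSup {x : ℝ | ∃ T : Finset (Sym2 V), IsSpanningTree V T ∧ x = ∏ e ∈ T, edgeWeight w e}

/-- The weight function of the weighted graph induced (on the multiset of vertices
`{f x : x : β}`, counted with multiplicity) by the weighted graph `w` on `A`:
two copies of the same vertex are linked by weight `1`, and otherwise the weight of
the corresponding edge of `w` is used. -/
noncomputable def inducedW {A β : Type*} [DecidableEq A] (w : A → A → ℝ) (f : β → A) :
    β → β → ℝ :=
  fun x y => if f x = f y then 1 else w (f x) (f y)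

/-- `W({β}, {a 0, …, a (ℓ-1)})`: maximal weight of an edge joining `β` to one of the
`a i`, with the convention that it is `1` if `β` is one of the `a i`,
and `0` (empty `sSup`) if `ℓ = 0`. -/
noncomputable def Wpt {A : Type*} [DecidableEq A] (w : A → A → ℝ) (β : A) {ℓ : ℕ}
    (a : Fin ℓ → A) : ℝ :=
  sSup {x : ℝ | ∃ i : Fin ℓ, x = if β = a i then 1 else w β (a i)}

/-- `w` is a `(Ψ, C)` weighted dependency graph for the family `Y`:
for every multiset `B = {b 0, …, b (r-1)}` of elements of `A` (`r ≥ 1`), the joint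
cumulant of the corresponding variables is bounded by `C r * Ψ B * M(L̃[B])`. -/
def IsWDG {Ω : Type*} [MeasurableSpace Ω] (μ : Measure Ω) {A : Type*} [DecidableEq A]
    (Y : A → Ω → ℝ) (w : A → A → ℝ) (Ψ : Multiset A → ℝ) (C : ℕ → ℝ) : Prop :=
  ∀ r : ℕ, 1 ≤ r → ∀ b : Fin r → A,
    |jointCumulant μ fun i => Y (b i)| ≤
      C r * Ψ (List.ofFn b : Multiset A) * treeMax (inducedW w b)

end WDGpaper

open WDGpaper

/-- The weight function of the `m`-th power graph, restricted to the multisets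
`I 0, …, I (r-1)` (each represented as a tuple of vertices of the weighted graph `w`):
weight `1` if the two multisets share an element, and otherwise the maximal weight of an
edge of `w` joining them. -/
noncomputable def powerTupleW {A : Type*} {r : ℕ} {ℓ : Fin r → ℕ} (w : A → A → ℝ)
    (I : (j : Fin r) → Fin (ℓ j) → A) : Fin r → Fin r → ℝ :=
  fun j k =>
    haveI := Classical.propDecidable
    if ∃ a b, I j a = I k b then 1
    else sSup {x : ℝ | ∃ a b, x = w (I j a) (I k b)}


section AuxSpanningTree
open SimpleGraph WDGpaper
set_option linter.unusedSectionVars false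

variable {V : Type*} [Fintype V] [DecidableEq V]

lemma exists_parent {G : SimpleGraph V} (hG : G.Connected) {root v : V} (hv : v ≠ root) :
    ∃ u, G.Adj v u ∧ G.dist u root + 1 = G.dist v root := by
  obtain ⟨p, hp⟩ := hG.exists_walk_length_eq_dist v root
  cases p with
  | nil => exact absurd rfl hv
  | @cons _ u _ h q =>
    refine ⟨u, h, ?_⟩
    have h1 : G.dist u root ≤ q.length := dist_le q
    have h2 : G.dist v root ≤ G.dist v u + G.dist u root := hG.dist_triangle
    have h3 : G.dist v u = 1 := dist_eq_one_iff_adj.mpr h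
    simp only [Walk.length_cons] at hp
    omega

lemma exists_spanning_tree [Nonempty V] (G : SimpleGraph V) (hG : G.Connected) :
    ∃ T : Finset (Sym2 V), IsSpanningTree V T ∧ ∀ e ∈ T, e ∈ G.edgeSet := by
  classical
  obtain ⟨root⟩ := ‹Nonempty V›
  have hpar : ∀ v : V, v ≠ root → ∃ u, G.Adj v u ∧ G.dist u root + 1 = G.dist v root :=
    fun v hv => exists_parent hG hv
  set par : V → V := fun v => if h : v = root then v else (hpar v h).choose with hpar_def
  have hadj : ∀ v, v ≠ root → G.Adj v (par v) := by
    intro v hv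
    simp only [hpar_def, dif_neg hv]
    exact (hpar v hv).choose_spec.1
  have hdist : ∀ v, v ≠ root → G.dist (par v) root + 1 = G.dist v root := by
    intro v hv
    simp only [hpar_def, dif_neg hv]
    exact (hpar v hv).choose_spec.2
  set T : Finset (Sym2 V) := Finset.image (fun v => s(v, par v)) (Finset.univ.erase root)
    with hT
  have hmemT : ∀ v, v ≠ root → s(v, par v) ∈ T := by
    intro v hv
    exact Finset.mem_image_of_mem _ (Finset.mem_erase.mpr ⟨hv, Finset.mem_univ v⟩)
  have hreach : ∀ v, (fromEdgeSet (↑T : Set (Sym2 V))).Reachable v root := by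
    intro v
    have key : ∀ n v, G.dist v root ≤ n → (fromEdgeSet (↑T : Set (Sym2 V))).Reachable v root := by
      intro n
      induction n with
      | zero =>
        intro v h
        have : v = root := hG.dist_eq_zero_iff.mp (Nat.le_zero.mp h)
        exact this ▸ Reachable.refl _
      | succ n ih =>
        intro v h
        by_cases hv : v = root
        · exact hv ▸ Reachable.refl _
        · have hadj' : (fromEdgeSet (↑T : Set (Sym2 V))).Adj v (par v) := by
            rw [fromEdgeSet_adj]
            exact ⟨Finset.mem_coe.mpr (hmemT v hv), (hadj v hv).ne⟩
          have hd := hdist v hv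
          exact hadj'.reachable.trans (ih (par v) (by omega))
    exact key (G.dist v root) v le_rfl
  refine ⟨T, ⟨?_, ?_, ?_⟩, ?_⟩
  · intro e he
    rw [hT, Finset.mem_image] at he
    obtain ⟨v, hv, rfl⟩ := he
    rw [Sym2.mk_isDiag_iff]
    exact (hadj v (Finset.mem_erase.mp hv).1).ne
  · exact Connected.mk fun u v => (hreach u).trans (hreach v).symm
  · have hinj : Set.InjOn (fun v => s(v, par v)) (Finset.univ.erase root) := by
      intro u hu v hv huv
      simp only [Finset.coe_erase, Set.mem_diff, Finset.mem_erase] at hu hv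
      have hu' : u ≠ root := by simpa using hu
      have hv' : v ≠ root := by simpa using hv
      rw [Sym2.eq_iff] at huv
      rcases huv with ⟨h1, _⟩ | ⟨h1, h2⟩
      · exact h1
      · have d1 := hdist u hu'
        have d2 := hdist v hv'
        rw [← h1] at d2
        rw [h2] at d1
        omega
    have hcard : T.card = Fintype.card V - 1 := by
      rw [hT, Finset.card_image_of_injOn (by simpa using hinj),
        Finset.card_erase_of_mem (Finset.mem_univ root), Finset.card_univ]
    have : 1 ≤ Fintype.card V := Fintype.card_pos
    omega
  · intro e he
    rw [hT, Finset.mem_image] at he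
    obtain ⟨v, hv, rfl⟩ := he
    exact (hadj v (Finset.mem_erase.mp hv).1)

open WDGpaper in
lemma treeMax_bddAbove {V : Type*} [Fintype V] [DecidableEq V] (w : V → V → ℝ) :
    BddAbove {x : ℝ | ∃ T : Finset (Sym2 V), IsSpanningTree V T ∧
      x = ∏ e ∈ T, edgeWeight w e} := by
  apply Set.Finite.bddAbove
  apply Set.Finite.subset
    (Set.finite_range fun T : Finset (Sym2 V) => ∏ e ∈ T, edgeWeight w e)
  rintro x ⟨T, _, rfl⟩; exact ⟨T, rfl⟩

open WDGpaper in
lemma le_treeMax {V : Type*} [Fintype V] [DecidableEq V] {w : V → V → ℝ}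
    {T : Finset (Sym2 V)} (h : IsSpanningTree V T) :
    ∏ e ∈ T, edgeWeight w e ≤ treeMax w :=
  le_csSup (treeMax_bddAbove w) ⟨T, h, rfl⟩

open WDGpaper in
lemma treeMax_attained {V : Type*} [Fintype V] [DecidableEq V] [Nonempty V]
    (w : V → V → ℝ) :
    ∃ T : Finset (Sym2 V), IsSpanningTree V T ∧ treeMax w = ∏ e ∈ T, edgeWeight w e := by
  have hne : {x : ℝ | ∃ T : Finset (Sym2 V), IsSpanningTree V T ∧
      x = ∏ e ∈ T, edgeWeight w e}.Nonempty := by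
    obtain ⟨T, hT, -⟩ := exists_spanning_tree (⊤ : SimpleGraph V) SimpleGraph.connected_top
    exact ⟨_, T, hT, rfl⟩
  have hfin : {x : ℝ | ∃ T : Finset (Sym2 V), IsSpanningTree V T ∧
      x = ∏ e ∈ T, edgeWeight w e}.Finite := by
    apply Set.Finite.subset
      (Set.finite_range fun T : Finset (Sym2 V) => ∏ e ∈ T, edgeWeight w e)
    rintro x ⟨T, _, rfl⟩; exact ⟨T, rfl⟩
  obtain ⟨T, hT, hx⟩ := hne.csSup_mem hfin
  exact ⟨T, hT, hx⟩

open WDGpaper in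
lemma edgeWeight_mk {V : Type*} (w : V → V → ℝ) (a b : V) :
    edgeWeight w s(a, b) = max (w a b) (w b a) := rfl

end AuxSpanningTree

/-- For multisets `I 0, …, I (r-1)` of at most `m` vertices of a weighted
graph `w`, and a partition `Δ` of the disjoint union `I 0 ⊎ ⋯ ⊎ I (r-1)` whose join with
`{I 0, …, I (r-1)}` is the one-block partition, the product of the maximal spanning tree
weights of the graphs induced on the blocks is at most the maximal spanning tree weight of
the graph induced by the `m`-th power graph on `{I 0, …, I (r-1)}`. -/
theorem prod_treeMax_blocks_le_treeMax_power
    {A : Type*} [DecidableEq A] (w : A → A → ℝ)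
    (hsym : ∀ a b, w a b = w b a) (hw0 : ∀ a b, 0 ≤ w a b) (hw1 : ∀ a b, w a b ≤ 1)
    (m : ℕ) (hm : 1 ≤ m) (r : ℕ) (hr : 1 ≤ r)
    (ℓ : Fin r → ℕ) (hℓ : ∀ j, 1 ≤ ℓ j ∧ ℓ j ≤ m)
    (I : (j : Fin r) → Fin (ℓ j) → A)
    (s : ℕ) (Δ : Fin s → Finset ((j : Fin r) × Fin (ℓ j)))
    (hne : ∀ i, (Δ i).Nonempty)
    (hdisj : ∀ i i', i ≠ i' → Disjoint (Δ i) (Δ i'))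
    (hcover : ∀ x, ∃ i, x ∈ Δ i)
    (hjoin : ∀ u v : (j : Fin r) × Fin (ℓ j),
      Relation.ReflTransGen (fun a b => (∃ i, a ∈ Δ i ∧ b ∈ Δ i) ∨ a.1 = b.1) u v) :
    ∏ i : Fin s, treeMax (inducedW w (fun x : {y // y ∈ Δ i} => I x.1.1 x.1.2))
      ≤ treeMax (powerTupleW w I) := by
  classical
  haveI : Nonempty (Fin r) := ⟨⟨0, hr⟩⟩
  have hx0 : ∀ j : Fin r, Nonempty (Fin (ℓ j)) := fun j => ⟨⟨0, (hℓ j).1⟩⟩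
  haveI hs1 : Nonempty (Fin s) := by
    obtain ⟨i, -⟩ := hcover ⟨⟨0, hr⟩, (hx0 _).some⟩
    exact ⟨i⟩
  haveI hVn : ∀ i : Fin s, Nonempty {y // y ∈ Δ i} :=
    fun i => ⟨⟨(hne i).choose, (hne i).choose_spec⟩⟩
  -- optimal trees on each block
  have hTex : ∀ i : Fin s, ∃ T : Finset (Sym2 {y // y ∈ Δ i}),
      IsSpanningTree _ T ∧
      treeMax (inducedW w (fun x : {y // y ∈ Δ i} => I x.1.1 x.1.2)) =
        ∏ e ∈ T, edgeWeight (inducedW w (fun x : {y // y ∈ Δ i} => I x.1.1 x.1.2)) e :=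
    fun i => treeMax_attained _
  choose T hT1 hT2 using hTex
  -- bounds on induced edge weights
  have hind0 : ∀ (i : Fin s) (a b : {y // y ∈ Δ i}),
      (0:ℝ) ≤ inducedW w (fun x : {y // y ∈ Δ i} => I x.1.1 x.1.2) a b := by
    intro i a b
    unfold inducedW
    split
    · norm_num
    · exact hw0 _ _
  have hind1 : ∀ (i : Fin s) (a b : {y // y ∈ Δ i}),
      inducedW w (fun x : {y // y ∈ Δ i} => I x.1.1 x.1.2) a b ≤ 1 := by
    intro i a b
    unfold inducedW
    split
    · norm_num
    · exact hw1 _ _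
  have hAW0 : ∀ (i : Fin s) (e : Sym2 {y // y ∈ Δ i}),
      0 ≤ edgeWeight (inducedW w (fun x : {y // y ∈ Δ i} => I x.1.1 x.1.2)) e := by
    intro i e
    induction e using Sym2.ind with
    | _ a b =>
      rw [edgeWeight_mk]
      exact le_max_of_le_left (hind0 i a b)
  have hAW1 : ∀ (i : Fin s) (e : Sym2 {y // y ∈ Δ i}),
      edgeWeight (inducedW w (fun x : {y // y ∈ Δ i} => I x.1.1 x.1.2)) e ≤ 1 := by
    intro i e
    induction e using Sym2.ind with
    | _ a b =>
      rw [edgeWeight_mk]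
      exact max_le (hind1 i a b) (hind1 i b a)
  -- the auxiliary graph on Fin r
  let G : SimpleGraph (Fin r) :=
    { Adj := fun j k => j ≠ k ∧ ∃ (i : Fin s) (x y : {y // y ∈ Δ i}),
        s(x, y) ∈ T i ∧ x.1.1 = j ∧ y.1.1 = k
      symm := ⟨by
        rintro j k ⟨hjk, i, x, y, hm, hx, hy⟩
        exact ⟨hjk.symm, i, y, x, by rwa [Sym2.eq_swap], hy, hx⟩⟩
      loopless := ⟨fun j h => h.1 rfl⟩ }
  have hstep : ∀ (i : Fin s) (x y : {y // y ∈ Δ i}), G.Reachable x.1.1 y.1.1 := by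
    intro i x y
    obtain ⟨p⟩ := (hT1 i).2.1.preconnected x y
    induction p with
    | nil => exact SimpleGraph.Reachable.refl _
    | @cons a b c h p ih =>
      rw [SimpleGraph.fromEdgeSet_adj] at h
      refine SimpleGraph.Reachable.trans ?_ ih
      by_cases hab : (a.1.1 : Fin r) = b.1.1
      · exact hab ▸ SimpleGraph.Reachable.refl _
      · exact SimpleGraph.Adj.reachable ⟨hab, i, a, b, Finset.mem_coe.mp h.1, rfl, rfl⟩
  have hGre : ∀ u v : (j : Fin r) × Fin (ℓ j), G.Reachable u.1 v.1 := by
    intro u v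
    induction hjoin u v with
    | refl => exact SimpleGraph.Reachable.refl _
    | @tail b c hpre hlast ih =>
      refine ih.trans ?_
      rcases hlast with ⟨i, hb, hc⟩ | h
      · exact hstep i ⟨b, hb⟩ ⟨c, hc⟩
      · exact h ▸ SimpleGraph.Reachable.refl _
  have hGconn : G.Connected :=
    SimpleGraph.Connected.mk fun j k => hGre ⟨j, (hx0 j).some⟩ ⟨k, (hx0 k).some⟩
  obtain ⟨S, hS, hSedge⟩ := exists_spanning_tree G hGconn
  -- pointwise weight comparison
  have hpt : ∀ (i : Fin s) (x y : {y // y ∈ Δ i}),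
      inducedW w (fun z : {y // y ∈ Δ i} => I z.1.1 z.1.2) x y ≤
        powerTupleW w I x.1.1 y.1.1 := by
    intro i x y
    unfold inducedW powerTupleW
    by_cases h : I x.1.1 x.1.2 = I y.1.1 y.1.2
    · rw [if_pos h, if_pos ⟨x.1.2, y.1.2, h⟩]
    · rw [if_neg h]
      by_cases h2 : ∃ a b, I x.1.1 a = I y.1.1 b
      · rw [if_pos h2]
        exact hw1 _ _
      · rw [if_neg h2]
        refine le_csSup ⟨1, ?_⟩ ⟨x.1.2, y.1.2, rfl⟩
        rintro z ⟨a, b, rfl⟩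
        exact hw1 _ _
  haveI : Nonempty ((i : Fin s) × Sym2 {y // y ∈ Δ i}) :=
    ⟨⟨hs1.some, s((hVn hs1.some).some, (hVn hs1.some).some)⟩⟩
  have hkey : ∀ e : Sym2 (Fin r), ∃ p : (i : Fin s) × Sym2 {y // y ∈ Δ i}, e ∈ S →
      p.2 ∈ T p.1 ∧ Sym2.map (fun x : {y // y ∈ Δ p.1} => x.1.1) p.2 = e ∧
      edgeWeight (inducedW w (fun x : {y // y ∈ Δ p.1} => I x.1.1 x.1.2)) p.2 ≤
        edgeWeight (powerTupleW w I) e := by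
    intro e
    induction e using Sym2.ind with
    | _ j k =>
      by_cases he : s(j, k) ∈ S
      · have hadj : G.Adj j k := G.mem_edgeSet.mp (hSedge _ he)
        obtain ⟨hjk, i, x, y, hm, hx, hy⟩ := hadj
        subst hx; subst hy
        refine ⟨⟨i, s(x, y)⟩, fun _ => ⟨hm, Sym2.map_pair_eq _ _ _, ?_⟩⟩
        rw [edgeWeight_mk, edgeWeight_mk]
        exact max_le_max (hpt i x y) (hpt i y x)
      · exact ⟨Classical.arbitrary _, fun h => absurd h he⟩
  choose Φ hΦ using hkey
  have himg : Finset.image Φ S ⊆ Finset.univ.sigma T := by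
    intro p hp
    rw [Finset.mem_image] at hp
    obtain ⟨e, he, rfl⟩ := hp
    exact Finset.mem_sigma.mpr ⟨Finset.mem_univ _, (hΦ e he).1⟩
  have hinj : ∀ e1 ∈ S, ∀ e2 ∈ S, Φ e1 = Φ e2 → e1 = e2 := by
    intro e1 h1 e2 h2 h
    rw [← (hΦ e1 h1).2.1, ← (hΦ e2 h2).2.1, h]
  calc ∏ i : Fin s, treeMax (inducedW w (fun x : {y // y ∈ Δ i} => I x.1.1 x.1.2))
      = ∏ p ∈ Finset.univ.sigma T,
          edgeWeight (inducedW w (fun x : {y // y ∈ Δ p.1} => I x.1.1 x.1.2)) p.2 := by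
        rw [Finset.prod_sigma]
        exact Finset.prod_congr rfl fun i _ => hT2 i
    _ ≤ ∏ p ∈ Finset.image Φ S,
          edgeWeight (inducedW w (fun x : {y // y ∈ Δ p.1} => I x.1.1 x.1.2)) p.2 := by
        rw [← Finset.prod_sdiff himg]
        refine mul_le_of_le_one_left
          (Finset.prod_nonneg fun p _ => hAW0 p.1 p.2)
          (Finset.prod_le_one (fun p _ => hAW0 p.1 p.2) (fun p _ => hAW1 p.1 p.2))
    _ = ∏ e ∈ S,
          edgeWeight (inducedW w (fun x : {y // y ∈ Δ (Φ e).1} => I x.1.1 x.1.2)) (Φ e).2 :=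
        Finset.prod_image hinj
    _ ≤ ∏ e ∈ S, edgeWeight (powerTupleW w I) e :=
        Finset.prod_le_prod (fun e _ => hAW0 _ _) (fun e he => (hΦ e he).2.2)
    _ ≤ treeMax (powerTupleW w I) := le_treeMax hS
end
end

section
/- Let L̃ be a (Ψ,C) weighted dependency graph for a family {Y_α, α ∈ A} of random variables (A finite). Define R = Σ_{α∈A} Ψ({α}) and, for ℓ ≥ 1, T_ℓ = max_{α₁,…,α_ℓ ∈ A} Σ_{β∈A} W({β},{α₁,…,α_ℓ}) · Ψ({α₁,…,α_ℓ,β})/Ψ({α₁,…,α_ℓ}). Then for every r ≥ 1, |κ_r(Σ_{α∈A} Y_α)| ≤ C_r · r! · R · T₁ ⋯ T_{r−1}, where κ_r denotes the r-th cumulant. -/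
open MeasureTheory ProbabilityTheory Filter

noncomputable section

open WDGpaper

namespace WDGpaper

open Finset MeasureTheory

section Aux

variable {A : Type*} [DecidableEq A] {w : A → A → ℝ}

lemma Wpt_set_finite (β : A) {ℓ : ℕ} (a : Fin ℓ → A) :
    {x : ℝ | ∃ i : Fin ℓ, x = if β = a i then 1 else w β (a i)}.Finite := by
  have : {x : ℝ | ∃ i : Fin ℓ, x = if β = a i then 1 else w β (a i)} =
      Set.range (fun i : Fin ℓ => if β = a i then 1 else w β (a i)) := by
    ext x; simp [eq_comm]
  rw [this]; exact Set.finite_range _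

lemma le_Wpt (β : A) {ℓ : ℕ} (a : Fin ℓ → A) (i : Fin ℓ) :
    (if β = a i then 1 else w β (a i)) ≤ Wpt w β a :=
  le_csSup (Wpt_set_finite β a).bddAbove ⟨i, rfl⟩

lemma Wpt_nonneg (hw0 : ∀ a b, 0 ≤ w a b) (β : A) {ℓ : ℕ} (hℓ : ℓ ≠ 0) (a : Fin ℓ → A) :
    0 ≤ Wpt w β a := by
  have i : Fin ℓ := ⟨0, Nat.pos_of_ne_zero hℓ⟩
  refine le_trans ?_ (le_Wpt β a i)
  split <;> [norm_num; exact hw0 _ _]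

lemma edgeWeight_induced {β' : Type*} (hsym : ∀ a b, w a b = w b a) (f : β' → A) (x y : β') :
    edgeWeight (inducedW w f) s(x, y) = if f x = f y then 1 else w (f x) (f y) := by
  simp only [edgeWeight, Sym2.lift_mk, inducedW, eq_comm (a := f x)]
  rcases eq_or_ne (f x) (f y) with h | h
  · simp [h, eq_comm]
  · simp [h, h.symm, hsym (f y) (f x), eq_comm]

lemma exists_ordering {r : ℕ} (hr : 1 ≤ r) (T : Finset (Sym2 (Fin r)))
    (hconn : (SimpleGraph.fromEdgeSet (↑T : Set (Sym2 (Fin r)))).Connected) :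
    ∃ v : Fin r → Fin r, Function.Bijective v ∧
      ∀ k : Fin r, (k : ℕ) ≠ 0 → ∃ j : Fin r, j < k ∧ s(v j, v k) ∈ T := by
  set G := SimpleGraph.fromEdgeSet (↑T : Set (Sym2 (Fin r))) with hG
  have key : ∀ m : ℕ, 1 ≤ m → m ≤ r → ∃ v : Fin m → Fin r, Function.Injective v ∧
      ∀ k : Fin m, (k : ℕ) ≠ 0 → ∃ j : Fin m, j < k ∧ s(v j, v k) ∈ T := by
    intro m hm
    induction m with
    | zero => omega
    | succ n ih =>
      intro hmr
      rcases Nat.eq_or_lt_of_le hm with h1 | h1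
      · have hn : n = 0 := by omega
        subst hn
        refine ⟨fun _ => ⟨0, hr⟩, fun a b _ => Fin.ext (by omega), ?_⟩
        intro k hk; exact absurd (Fin.val_eq_zero k) hk
      · have hn1 : 1 ≤ n := by omega
        obtain ⟨v, hvinj, hvp⟩ := ih hn1 (by omega)
        have hne : (Set.range v)ᶜ.Nonempty := by
          by_contra h
          rw [Set.not_nonempty_iff_eq_empty, ← Set.compl_univ, compl_inj_iff] at h
          have hcard : Fintype.card (Fin r) ≤ Fintype.card (Fin n) := by
            have hs : Function.Surjective v := by
              intro x; have : x ∈ Set.range v := h ▸ Set.mem_univ x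
              exact this
            exact Fintype.card_le_of_surjective v hs
          simp at hcard; omega
        obtain ⟨x, hx⟩ := hne
        have hx0 : v ⟨0, by omega⟩ ∈ Set.range v := Set.mem_range_self _
        obtain ⟨walk⟩ := hconn (v ⟨0, by omega⟩) x
        obtain ⟨d, _, hd1, hd2⟩ := walk.exists_boundary_dart (Set.range v) hx0 hx
        have hadj : s(d.toProd.1, d.toProd.2) ∈ (↑T : Set (Sym2 (Fin r))) ∧
            d.toProd.1 ≠ d.toProd.2 := (SimpleGraph.fromEdgeSet_adj _).mp d.adj
        obtain ⟨j0, hj0⟩ := hd1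
        refine ⟨Fin.snoc v d.toProd.2, ?_, ?_⟩
        · intro a b hab
          rcases Fin.eq_castSucc_or_eq_last a with ⟨a', rfl⟩ | rfl <;>
            rcases Fin.eq_castSucc_or_eq_last b with ⟨b', rfl⟩ | rfl
          · simp only [Fin.snoc_castSucc] at hab
            exact congrArg Fin.castSucc (hvinj hab)
          · simp only [Fin.snoc_castSucc, Fin.snoc_last] at hab
            exact absurd ⟨a', hab⟩ hd2
          · simp only [Fin.snoc_castSucc, Fin.snoc_last] at hab
            exact absurd ⟨b', hab.symm⟩ hd2
          · rfl
        · intro k hk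
          rcases Fin.eq_castSucc_or_eq_last k with ⟨k', rfl⟩ | rfl
          · have hk' : (k' : ℕ) ≠ 0 := by simpa using hk
            obtain ⟨j, hj, hjT⟩ := hvp k' hk'
            refine ⟨j.castSucc, by simpa using hj, ?_⟩
            simpa only [Fin.snoc_castSucc] using hjT
          · refine ⟨j0.castSucc, ?_, ?_⟩
            · simp [Fin.castSucc_lt_last]
            · rw [Fin.snoc_castSucc, Fin.snoc_last, hj0]
              exact hadj.1
  obtain ⟨v, hvinj, hvp⟩ := key r hr le_rfl
  exact ⟨v, ⟨hvinj, Finite.surjective_of_injective hvinj⟩, hvp⟩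

/-- product of `Wpt`s along the prefix order. -/
noncomputable def Pfun (w : A → A → ℝ) {r : ℕ} (g : Fin r → A) : ℝ :=
  ∏ k : Fin r, if _ : (k : ℕ) = 0 then 1
    else Wpt w (g k) (fun j : Fin (k : ℕ) => g (j.castLE k.isLt.le))

lemma Pfun_nonneg (hw0 : ∀ a b, 0 ≤ w a b) {r : ℕ} (g : Fin r → A) : 0 ≤ Pfun w g := by
  refine Finset.prod_nonneg fun k _ => ?_
  split
  · norm_num
  · exact Wpt_nonneg hw0 _ (by assumption) _

lemma edgeWeight_induced_nonneg {β' : Type*} (hsym : ∀ a b, w a b = w b a)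
    (hw0 : ∀ a b, 0 ≤ w a b) (f : β' → A) (e : Sym2 β') :
    0 ≤ edgeWeight (inducedW w f) e := by
  induction e using Sym2.ind with
  | _ x y => rw [edgeWeight_induced hsym]; split <;> [norm_num; exact hw0 _ _]

lemma edgeWeight_induced_le_one {β' : Type*} (hsym : ∀ a b, w a b = w b a)
    (hw1 : ∀ a b, w a b ≤ 1) (f : β' → A) (e : Sym2 β') :
    edgeWeight (inducedW w f) e ≤ 1 := by
  induction e using Sym2.ind with
  | _ x y => rw [edgeWeight_induced hsym]; split <;> [exact le_refl 1; exact hw1 _ _]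

lemma treeMax_le_sum_perm (hsym : ∀ a b, w a b = w b a) (hw0 : ∀ a b, 0 ≤ w a b)
    (hw1 : ∀ a b, w a b ≤ 1) {r : ℕ} (hr : 1 ≤ r) (f : Fin r → A) :
    treeMax (inducedW w f) ≤ ∑ σ : Equiv.Perm (Fin r), Pfun w (f ∘ σ) := by
  have hRHS : ∀ σ : Equiv.Perm (Fin r), 0 ≤ Pfun w (f ∘ σ) := fun σ => Pfun_nonneg hw0 _
  rcases Set.eq_empty_or_nonempty
      {x : ℝ | ∃ T : Finset (Sym2 (Fin r)), IsSpanningTree (Fin r) T ∧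
        x = ∏ e ∈ T, edgeWeight (inducedW w f) e} with hS | hS
  · rw [treeMax, hS, Real.sSup_empty]
    exact Finset.sum_nonneg fun σ _ => hRHS σ
  · refine csSup_le hS ?_
    rintro x ⟨T, hT, rfl⟩
    obtain ⟨v, hbij, hvp⟩ := exists_ordering hr T hT.2.1
    have hvinj := hbij.1
    set p : Fin r → Fin r := fun k =>
      if h : (k : ℕ) ≠ 0 then (hvp k h).choose else k with hp
    have hpspec : ∀ k : Fin r, (k : ℕ) ≠ 0 → p k < k ∧ s(v (p k), v k) ∈ T := by
      intro k hk
      simp only [hp, dif_pos hk]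
      exact (hvp k hk).choose_spec
    set K : Finset (Fin r) := univ.filter (fun k => (k : ℕ) ≠ 0) with hK
    set E : Finset (Sym2 (Fin r)) := K.image (fun k => s(v (p k), v k)) with hE
    have hET : E ⊆ T := by
      intro e he
      rw [hE, Finset.mem_image] at he
      obtain ⟨k, hk, rfl⟩ := he
      exact (hpspec k (by simpa [hK] using hk)).2
    have hInj : Set.InjOn (fun k => s(v (p k), v k)) K := by
      intro a ha b hb hab
      have ha' : (a : ℕ) ≠ 0 := by simpa [hK] using ha
      have hb' : (b : ℕ) ≠ 0 := by simpa [hK] using hb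
      rw [Sym2.eq_iff] at hab
      rcases hab with ⟨h1, h2⟩ | ⟨h1, h2⟩
      · exact hvinj h2
      · have e1 : p a = b := hvinj h1
        have e2 : a = p b := hvinj h2
        have h3 : b < a := e1 ▸ (hpspec a ha').1
        have h4 : a < b := by rw [e2]; exact (hpspec b hb').1
        exact absurd h4 (not_lt.mpr h3.le)
    have step1 : ∏ e ∈ T, edgeWeight (inducedW w f) e ≤ ∏ e ∈ E, edgeWeight (inducedW w f) e := by
      rw [← Finset.prod_sdiff hET]
      have h1 : ∏ e ∈ T \ E, edgeWeight (inducedW w f) e ≤ 1 :=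
        Finset.prod_le_one (fun e _ => edgeWeight_induced_nonneg hsym hw0 f e)
          (fun e _ => edgeWeight_induced_le_one hsym hw1 f e)
      have h2 : 0 ≤ ∏ e ∈ E, edgeWeight (inducedW w f) e :=
        Finset.prod_nonneg fun e _ => edgeWeight_induced_nonneg hsym hw0 f e
      exact mul_le_of_le_one_left h2 h1
    have step2 : ∏ e ∈ E, edgeWeight (inducedW w f) e
        = ∏ k ∈ K, edgeWeight (inducedW w f) s(v (p k), v k) :=
      Finset.prod_image fun a ha b hb h => hInj ha hb h
    have step3 : ∏ k ∈ K, edgeWeight (inducedW w f) s(v (p k), v k) ≤ Pfun w (f ∘ v) := by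
      rw [Pfun, ← Finset.prod_subset (Finset.subset_univ K)
        (fun x _ hx => dif_pos (by simpa [hK] using hx))]
      refine Finset.prod_le_prod (fun k _ => edgeWeight_induced_nonneg hsym hw0 f _) ?_
      intro k hk
      have hk' : (k : ℕ) ≠ 0 := by simpa [hK] using hk
      rw [dif_neg hk', edgeWeight_induced hsym]
      have hlt : ((p k : ℕ)) < (k : ℕ) := (hpspec k hk').1
      have hW := le_Wpt (w := w) ((f ∘ v) k)
        (fun j : Fin (k : ℕ) => (f ∘ v) (j.castLE k.isLt.le)) ⟨(p k : ℕ), hlt⟩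
      have hcast : (Fin.castLE k.isLt.le ⟨(p k : ℕ), hlt⟩) = p k := Fin.ext rfl
      rw [hcast] at hW
      refine le_trans (le_of_eq ?_) hW
      simp only [Function.comp_apply]
      rcases eq_or_ne (f (v (p k))) (f (v k)) with h | h
      · simp [h]
      · rw [if_neg h, if_neg (Ne.symm h), hsym]
    have hfv : Pfun w (f ∘ v) ≤ ∑ σ : Equiv.Perm (Fin r), Pfun w (f ∘ σ) := by
      have := Finset.single_le_sum (f := fun σ : Equiv.Perm (Fin r) => Pfun w (f ∘ σ))
        (fun σ _ => hRHS σ) (Finset.mem_univ (Equiv.ofBijective v hbij))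
      exact this
    exact le_trans step1 (step2 ▸ le_trans step3 hfv)

lemma snoc_lt {r : ℕ} (g : Fin r → A) (β : A) (i : Fin (r + 1)) (h : (i : ℕ) < r) :
    Fin.snoc (α := fun _ => A) g β i = g ⟨i, h⟩ := by
  have h2 := Fin.snoc_castSucc (α := fun _ => A) β g ⟨i, h⟩
  rwa [show (⟨(i : ℕ), h⟩ : Fin r).castSucc = i from Fin.ext rfl] at h2

lemma Pfun_snoc {r : ℕ} (hr : 1 ≤ r) (g : Fin r → A) (β : A) :
    Pfun w (Fin.snoc g β) = Pfun w g * Wpt w β g := by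
  rw [Pfun, Fin.prod_univ_castSucc]
  congr 1
  · rw [Pfun]
    refine Finset.prod_congr rfl fun k _ => ?_
    rcases Nat.eq_zero_or_pos (k : ℕ) with h0 | h0
    · rw [dif_pos (by simpa using h0), dif_pos h0]
    · rw [dif_neg (by simp; omega), dif_neg (by omega)]
      congr 1
      · exact Fin.snoc_castSucc (α := fun _ => A) β g k
      · funext j
        rw [snoc_lt g β _ (lt_trans j.isLt k.isLt)]
        exact congrArg g (Fin.ext rfl)
  · rw [dif_neg (by simp; omega)]
    congr 1
    · exact Fin.snoc_last (α := fun _ => A) β g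
    · funext j
      rw [snoc_lt g β _ (by exact j.isLt)]
      exact congrArg g (Fin.ext rfl)

lemma ofFn_snoc_multiset {r : ℕ} (g : Fin r → A) (β : A) :
    (List.ofFn (Fin.snoc g β) : Multiset A) = (List.ofFn g : Multiset A) + {β} := by
  rw [List.ofFn_succ' (Fin.snoc g β)]
  simp only [Fin.snoc_castSucc, Fin.snoc_last, List.concat_eq_append]
  rfl

lemma ofFn_perm_multiset {A' : Type*} {r : ℕ} (f : Fin r → A') (σ : Equiv.Perm (Fin r)) :
    (List.ofFn (f ∘ σ) : Multiset A') = (List.ofFn f : Multiset A') := by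
  have h1 : ∀ g : Fin r → A', (List.ofFn g : Multiset A') = Multiset.map g Finset.univ.val := by
    intro g; rw [List.ofFn_eq_map]; rfl
  rw [h1, h1]
  have h2 : Multiset.map (σ : Fin r → Fin r) (Finset.univ.val) = Finset.univ.val := by
    have := congrArg Finset.val (Finset.map_univ_equiv σ)
    simpa [Finset.map_val] using this
  calc Multiset.map (f ∘ σ) Finset.univ.val
      = Multiset.map f (Multiset.map (σ : Fin r → Fin r) Finset.univ.val) := by
        rw [Multiset.map_map]
    _ = Multiset.map f Finset.univ.val := by rw [h2]

end Aux

section SumA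

variable {A : Type*} [Fintype A] [DecidableEq A] [Nonempty A] {w : A → A → ℝ}

lemma sumA (hw0 : ∀ a b, 0 ≤ w a b)
    (Ψ : Multiset A → ℝ) (hΨ : ∀ B, 0 < Ψ B) (T : ℕ → ℝ)
    (hT : ∀ ℓ : ℕ, 1 ≤ ℓ → T ℓ = ⨆ a : Fin ℓ → A, ∑ β : A,
        Wpt w β a * (Ψ ((List.ofFn a : Multiset A) + {β}) / Ψ (List.ofFn a : Multiset A))) :
    ∀ r : ℕ, 1 ≤ r →
      ∑ g : Fin r → A, Ψ (List.ofFn g : Multiset A) * Pfun w g ≤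
        (∑ α : A, Ψ {α}) * ∏ ℓ ∈ Finset.Ico 1 r, T ℓ := by
  intro r hr
  induction r, hr using Nat.le_induction with
  | base =>
    rw [show Finset.Ico 1 1 = ∅ from rfl, Finset.prod_empty, mul_one]
    have h1 : ∀ g : Fin 1 → A, Pfun w g = 1 := by
      intro g; rw [Pfun, Fin.prod_univ_one]; simp
    refine le_of_eq ?_
    rw [Fintype.sum_equiv (Equiv.funUnique (Fin 1) A) _ (fun α : A => Ψ {α}) ?_]
    intro g
    rw [h1 g, mul_one]
    congr 1
  | succ r hr ih =>
    have hbdd : ∀ (a : Fin r → A), BddAbove (Set.range fun a : Fin r → A => ∑ β : A,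
        Wpt w β a * (Ψ ((List.ofFn a : Multiset A) + {β}) / Ψ (List.ofFn a : Multiset A))) :=
      fun _ => (Set.finite_range _).bddAbove
    have hsum_nonneg : ∀ g' : Fin r → A, 0 ≤ ∑ β : A,
        Wpt w β g' * (Ψ ((List.ofFn g' : Multiset A) + {β}) / Ψ (List.ofFn g' : Multiset A)) := by
      intro g'
      refine Finset.sum_nonneg fun β _ => mul_nonneg (Wpt_nonneg hw0 β (by omega) g') ?_
      exact le_of_lt (div_pos (hΨ _) (hΨ _))
    have hsum_le : ∀ g' : Fin r → A, (∑ β : A,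
        Wpt w β g' * (Ψ ((List.ofFn g' : Multiset A) + {β}) / Ψ (List.ofFn g' : Multiset A)))
          ≤ T r := by
      intro g'
      rw [hT r hr]
      exact le_ciSup (hbdd g') g'
    have hTr : 0 ≤ T r :=
      le_trans (hsum_nonneg (fun _ => Classical.arbitrary A)) (hsum_le _)
    let e : (Fin r → A) × A ≃ (Fin (r + 1) → A) :=
      { toFun := fun p => Fin.snoc p.1 p.2
        invFun := fun g => (Fin.init g, g (Fin.last r))
        left_inv := fun p => by simp
        right_inv := fun g => by simp }
    rw [← Equiv.sum_comp e (fun g : Fin (r + 1) → A => Ψ (List.ofFn g : Multiset A) * Pfun w g),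
      Fintype.sum_prod_type]
    have hterm : ∀ (g' : Fin r → A) (β : A),
        Ψ (List.ofFn (e (g', β)) : Multiset A) * Pfun w (e (g', β)) =
          (Ψ (List.ofFn g' : Multiset A) * Pfun w g') *
            (Wpt w β g' *
              (Ψ ((List.ofFn g' : Multiset A) + {β}) / Ψ (List.ofFn g' : Multiset A))) := by
      intro g' β
      show Ψ (List.ofFn (Fin.snoc g' β) : Multiset A) * Pfun w (Fin.snoc g' β) = _
      rw [Pfun_snoc hr, ofFn_snoc_multiset]
      have hne := (hΨ ((List.ofFn g' : Multiset A))).ne'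
      field_simp
    calc ∑ g' : Fin r → A, ∑ β : A, Ψ (List.ofFn (e (g', β)) : Multiset A) * Pfun w (e (g', β))
        = ∑ g' : Fin r → A, (Ψ (List.ofFn g' : Multiset A) * Pfun w g') *
            ∑ β : A, Wpt w β g' *
              (Ψ ((List.ofFn g' : Multiset A) + {β}) / Ψ (List.ofFn g' : Multiset A)) := by
          refine Finset.sum_congr rfl fun g' _ => ?_
          rw [Finset.mul_sum]
          exact Finset.sum_congr rfl fun β _ => hterm g' β
      _ ≤ ∑ g' : Fin r → A, (Ψ (List.ofFn g' : Multiset A) * Pfun w g') * T r := by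
          refine Finset.sum_le_sum fun g' _ => ?_
          exact mul_le_mul_of_nonneg_left (hsum_le g')
            (mul_nonneg (le_of_lt (hΨ _)) (Pfun_nonneg hw0 g'))
      _ = (∑ g' : Fin r → A, Ψ (List.ofFn g' : Multiset A) * Pfun w g') * T r := by
          rw [← Finset.sum_mul]
      _ ≤ ((∑ α : A, Ψ {α}) * ∏ ℓ ∈ Finset.Ico 1 r, T ℓ) * T r :=
          mul_le_mul_of_nonneg_right ih hTr
      _ = (∑ α : A, Ψ {α}) * ∏ ℓ ∈ Finset.Ico 1 (r + 1), T ℓ := by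
          rw [Finset.prod_Ico_succ_top hr, mul_assoc]

end SumA

section Expand

variable {Ω : Type*} [MeasurableSpace Ω] {μ : Measure Ω}
  {A : Type*} [Fintype A] [DecidableEq A] [Nonempty A] {Y : A → Ω → ℝ}

lemma integrable_prod {r : ℕ}
    (hint : ∀ (k : ℕ) (b : Fin k → A), Integrable (fun ω => ∏ i, Y (b i) ω) μ)
    (B : Finset (Fin r)) (h : Fin r → A) :
    Integrable (fun ω => ∏ i ∈ B, Y (h i) ω) μ := by
  have e := B.equivFin
  have h2 := hint B.card (fun j => h (e.symm j))
  have heq : (fun ω => ∏ i ∈ B, Y (h i) ω)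
      = fun ω => ∏ j : Fin B.card, Y (h (e.symm j)) ω := by
    funext ω
    rw [← Finset.prod_attach B (fun i => Y (h i) ω)]
    exact Fintype.prod_equiv e _ _ (fun x => by simp)
  rw [heq]; exact h2

lemma cumulant_expand
    (hint : ∀ (k : ℕ) (b : Fin k → A), Integrable (fun ω => ∏ i, Y (b i) ω) μ) (r : ℕ) :
    jointCumulant μ (fun _ : Fin r => fun ω => ∑ α : A, Y α ω)
      = ∑ f : Fin r → A, jointCumulant μ (fun i => Y (f i)) := by
  simp only [jointCumulant]
  rw [Finset.sum_comm]
  refine Finset.sum_congr rfl fun π _ => ?_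
  rw [← Finset.mul_sum]
  congr 1
  have expand : ∀ B ∈ π.parts,
      (∫ ω, ∏ i ∈ B, (∑ α : A, Y α ω) ∂μ)
        = ∑ g ∈ B.pi (fun _ => (Finset.univ : Finset A)),
            ∫ ω, ∏ x ∈ B.attach, Y (g x.1 x.2) ω ∂μ := by
    intro B _
    have h1 : ∀ ω : Ω, ∏ i ∈ B, (∑ α : A, Y α ω)
        = ∑ g ∈ B.pi (fun _ => (Finset.univ : Finset A)),
            ∏ x ∈ B.attach, Y (g x.1 x.2) ω :=
      fun ω => Finset.prod_sum B _ _
    calc (∫ ω, ∏ i ∈ B, (∑ α : A, Y α ω) ∂μ)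
        = ∫ ω, ∑ g ∈ B.pi (fun _ => (Finset.univ : Finset A)),
            ∏ x ∈ B.attach, Y (g x.1 x.2) ω ∂μ := by simp_rw [h1]
      _ = _ := by
          refine MeasureTheory.integral_finset_sum _ fun g _ => ?_
          have heq : (fun ω => ∏ x ∈ B.attach, Y (g x.1 x.2) ω)
              = fun ω => ∏ i ∈ B,
                  Y (if h : i ∈ B then g i h else Classical.arbitrary A) ω := by
            funext ω
            rw [← Finset.prod_attach B
              (fun i => Y (if h : i ∈ B then g i h else Classical.arbitrary A) ω)]
            refine Finset.prod_congr rfl fun x _ => ?_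
            rw [dif_pos x.2]
          rw [heq]
          exact integrable_prod hint B _
  calc ∏ B ∈ π.parts, ∫ ω, ∏ i ∈ B, (∑ α : A, Y α ω) ∂μ
      = ∏ B ∈ π.parts, ∑ g ∈ B.pi (fun _ => (Finset.univ : Finset A)),
          ∫ ω, ∏ x ∈ B.attach, Y (g x.1 x.2) ω ∂μ := Finset.prod_congr rfl expand
    _ = ∑ G ∈ π.parts.pi (fun B => B.pi (fun _ => (Finset.univ : Finset A))),
          ∏ B ∈ π.parts.attach,
            ∫ ω, ∏ x ∈ (B : Finset (Fin r)).attach, Y (G B.1 B.2 x.1 x.2) ω ∂μ :=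
        Finset.prod_sum _ _ _
    _ = ∑ f : Fin r → A, ∏ B ∈ π.parts, ∫ ω, ∏ i ∈ B, Y (f i) ω ∂μ := by
        refine Finset.sum_nbij'
          (fun G => fun x : Fin r =>
            G (π.part x) (π.part_mem.mpr (Finset.mem_univ x)) x (π.mem_part_self.mpr (Finset.mem_univ x)))
          (fun f => fun B _ x _ => f x)
          (fun G _ => Finset.mem_univ _)
          (fun f _ => Finset.mem_pi.mpr fun B hB => Finset.mem_pi.mpr fun x hx =>
            Finset.mem_univ _)
          ?_ ?_ ?_
        · intro G _
          funext B hB x hx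
          have hp : π.part x = B :=
            π.eq_of_mem_parts (π.part_mem.mpr (Finset.mem_univ x)) hB
              (π.mem_part_self.mpr (Finset.mem_univ x)) hx
          subst hp
          rfl
        · intro f _
          rfl
        · intro G _
          rw [← Finset.prod_attach π.parts (fun B => ∫ ω, ∏ i ∈ B,
            Y (G (π.part i) (π.part_mem.mpr (Finset.mem_univ i)) i
              (π.mem_part_self.mpr (Finset.mem_univ i))) ω ∂μ)]
          refine Finset.prod_congr rfl ?_
          rintro ⟨B, hB⟩ _
          congr 1
          funext ω
          rw [← Finset.prod_attach B (fun i => Y (G (π.part i) (π.part_mem.mpr (Finset.mem_univ i)) i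
              (π.mem_part_self.mpr (Finset.mem_univ i))) ω)]
          refine Finset.prod_congr rfl ?_
          rintro ⟨x, hx⟩ _
          have hp : π.part x = B :=
            π.eq_of_mem_parts (π.part_mem.mpr (Finset.mem_univ x)) hB
              (π.mem_part_self.mpr (Finset.mem_univ x)) hx
          subst hp
          rfl

end Expand

end WDGpaper

open WDGpaper

/-- Bound on the cumulants of a sum of random variables admitting a
`(Ψ, C)` weighted dependency graph: `|κ_r(Σ_α Y_α)| ≤ C_r · r! · R · T₁ ⋯ T_{r-1}`. -/
theorem cumulant_sum_le_of_isWDG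
    {Ω : Type*} [MeasurableSpace Ω] (μ : Measure Ω) [IsProbabilityMeasure μ]
    {A : Type*} [Fintype A] [DecidableEq A] [Nonempty A]
    (Y : A → Ω → ℝ)
    (hint : ∀ (k : ℕ) (b : Fin k → A), Integrable (fun ω => ∏ i, Y (b i) ω) μ)
    (w : A → A → ℝ) (hsym : ∀ a b, w a b = w b a)
    (hw0 : ∀ a b, 0 ≤ w a b) (hw1 : ∀ a b, w a b ≤ 1)
    (Ψ : Multiset A → ℝ) (hΨ : ∀ B, 0 < Ψ B)
    (C : ℕ → ℝ) (hC : ∀ k, 0 < C k)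
    (hWDG : IsWDG μ Y w Ψ C)
    (R : ℝ) (hR : R = ∑ α : A, Ψ {α})
    (T : ℕ → ℝ)
    (hT : ∀ ℓ : ℕ, 1 ≤ ℓ → T ℓ = ⨆ a : Fin ℓ → A, ∑ β : A,
        Wpt w β a * (Ψ ((List.ofFn a : Multiset A) + {β}) / Ψ (List.ofFn a : Multiset A)))
    (r : ℕ) (hr : 1 ≤ r) :
    |jointCumulant μ (fun _ : Fin r => fun ω => ∑ α : A, Y α ω)| ≤
      C r * (Nat.factorial r : ℝ) * R * ∏ ℓ ∈ Finset.Ico 1 r, T ℓ := by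
  have hWpt_le_one : ∀ (β : A) {ℓ : ℕ}, ℓ ≠ 0 → ∀ a : Fin ℓ → A, Wpt w β a ≤ 1 := by
    intro β ℓ hℓ a
    refine csSup_le ⟨_, ⟨⟨0, Nat.pos_of_ne_zero hℓ⟩, rfl⟩⟩ ?_
    rintro x ⟨i, rfl⟩
    split
    · exact le_refl 1
    · exact hw1 _ _
  have key := cumulant_expand (μ := μ) (Y := Y) hint r
  rw [key]
  have hE : ∀ σ : Equiv.Perm (Fin r),
      (∑ f : Fin r → A, Ψ (List.ofFn (f ∘ σ) : Multiset A) * Pfun w (f ∘ σ))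
        = ∑ g : Fin r → A, Ψ (List.ofFn g : Multiset A) * Pfun w g := by
    intro σ
    let E : (Fin r → A) ≃ (Fin r → A) :=
      { toFun := fun f => f ∘ σ
        invFun := fun f => f ∘ σ.symm
        left_inv := fun f => by funext x; simp
        right_inv := fun f => by funext x; simp }
    exact Equiv.sum_comp E (fun g => Ψ (List.ofFn g : Multiset A) * Pfun w g)
  calc |∑ f : Fin r → A, jointCumulant μ fun i => Y (f i)|
      ≤ ∑ f : Fin r → A, |jointCumulant μ fun i => Y (f i)| :=
        Finset.abs_sum_le_sum_abs _ _
    _ ≤ ∑ f : Fin r → A, C r * Ψ (List.ofFn f : Multiset A) * treeMax (inducedW w f) :=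
        Finset.sum_le_sum fun f _ => hWDG r hr f
    _ ≤ ∑ f : Fin r → A, C r * Ψ (List.ofFn f : Multiset A) *
          ∑ σ : Equiv.Perm (Fin r), Pfun w (f ∘ σ) := by
        refine Finset.sum_le_sum fun f _ => ?_
        exact mul_le_mul_of_nonneg_left (treeMax_le_sum_perm hsym hw0 hw1 hr f)
          (mul_nonneg (hC r).le (hΨ _).le)
    _ = ∑ f : Fin r → A, ∑ σ : Equiv.Perm (Fin r),
          C r * (Ψ (List.ofFn (f ∘ σ) : Multiset A) * Pfun w (f ∘ σ)) := by
        refine Finset.sum_congr rfl fun f _ => ?_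
        rw [Finset.mul_sum]
        refine Finset.sum_congr rfl fun σ _ => ?_
        rw [ofFn_perm_multiset f σ, mul_assoc]
    _ = ∑ σ : Equiv.Perm (Fin r), ∑ f : Fin r → A,
          C r * (Ψ (List.ofFn (f ∘ σ) : Multiset A) * Pfun w (f ∘ σ)) := Finset.sum_comm
    _ = ∑ σ : Equiv.Perm (Fin r), C r *
          ∑ g : Fin r → A, Ψ (List.ofFn g : Multiset A) * Pfun w g := by
        refine Finset.sum_congr rfl fun σ _ => ?_
        rw [← Finset.mul_sum, hE σ]
    _ = (Nat.factorial r : ℝ) *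
          (C r * ∑ g : Fin r → A, Ψ (List.ofFn g : Multiset A) * Pfun w g) := by
        rw [Finset.sum_const, Finset.card_univ, Fintype.card_perm, Fintype.card_fin,
          nsmul_eq_mul]
    _ ≤ (Nat.factorial r : ℝ) *
          (C r * ((∑ α : A, Ψ {α}) * ∏ ℓ ∈ Finset.Ico 1 r, T ℓ)) := by
        refine mul_le_mul_of_nonneg_left ?_ (by positivity)
        exact mul_le_mul_of_nonneg_left (sumA hw0 Ψ hΨ T hT r hr) (hC r).le
    _ = C r * (Nat.factorial r : ℝ) * R * ∏ ℓ ∈ Finset.Ico 1 r, T ℓ := by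
        rw [hR]; ring
end
end

section
/- Let (X_n)_{n≥1} be a sequence of positive integers with X_n → ∞, let ℓ ≥ 1 and let a₁,…,a_ℓ be nonnegative integers. For Δ ⊆ [ℓ] set u⁽ⁿ⁾_Δ = (X_n − Σ_{i∈Δ} a_i)!, well defined for n ≥ n₀ where X_n ≥ a₁+⋯+a_ℓ. Then the sequence (u⁽ⁿ⁾)_{n≥n₀} has the ε_n small cumulant / quasi-factorization property with ε_n = 1/X_n; in particular, for every Δ ⊆ [ℓ] with |Δ| ≥ 2 there is a constant K_Δ (depending on a₁,…,a_ℓ) such that |P_Δ(u⁽ⁿ⁾) − 1| ≤ K_Δ · X_n^{−|Δ|+1} for all n ≥ n₀. -/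
open MeasureTheory ProbabilityTheory Filter

noncomputable section

open WDGpaper

namespace QFhelper

variable {ℓ : ℕ}

noncomputable def Sr (a : Fin ℓ → ℕ) (δ : Finset (Fin ℓ)) : ℝ := ∑ i ∈ δ, (a i : ℝ)

lemma Sr_nonneg (a : Fin ℓ → ℕ) (δ : Finset (Fin ℓ)) : 0 ≤ Sr a δ := by
  unfold Sr; positivity

lemma Sr_mono (a : Fin ℓ → ℕ) {δ t : Finset (Fin ℓ)} (h : δ ⊆ t) : Sr a δ ≤ Sr a t :=
  Finset.sum_le_sum_of_subset_of_nonneg h (fun i _ _ => by positivity)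

lemma zpow_neg_anti {x y : ℝ} (hx : 0 < x) (hxy : x ≤ y) (q : ℕ) :
    y ^ (-(q : ℤ)) ≤ x ^ (-(q : ℤ)) := by
  rw [zpow_neg, zpow_neg, zpow_natCast, zpow_natCast]
  exact inv_anti₀ (pow_pos hx q) (pow_le_pow_left₀ hx.le hxy q)

lemma sum_inv_pow_bound (a : Fin ℓ → ℕ) (Δ : Finset (Fin ℓ)) :
    ∀ p : ℕ, 1 ≤ p → ∀ Y : ℝ, Sr a Δ < Y →
    |∑ δ ∈ Δ.powerset, (-1 : ℝ) ^ δ.card * (Y - Sr a δ) ^ (-(p : ℤ))| ≤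
      (∏ j ∈ Finset.range Δ.card, ((p : ℝ) + j)) * (∏ i ∈ Δ, (a i : ℝ)) *
        (Y - Sr a Δ) ^ (-((p : ℤ) + Δ.card)) := by
  induction Δ using Finset.cons_induction with
  | empty =>
    intro p hp Y hY
    have h0 : Sr a (∅ : Finset (Fin ℓ)) = 0 := by simp [Sr]
    rw [h0] at hY
    simp only [Finset.powerset_empty, Finset.sum_singleton, Finset.card_empty, pow_zero,
      one_mul, Finset.range_zero, Finset.prod_empty, h0, Nat.cast_zero, add_zero, sub_zero]
    rw [abs_of_pos (zpow_pos hY _)]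
  | cons k s hk ih =>
    intro p hp Y hY
    have hScons : Sr a (Finset.cons k s hk) = (a k : ℝ) + Sr a s := Finset.sum_cons hk
    have hak : (0 : ℝ) ≤ (a k : ℝ) := by positivity
    have hYs : Sr a s < Y - (a k : ℝ) := by rw [hScons] at hY; linarith
    set F : ℝ → ℝ := fun Z => ∑ δ ∈ s.powerset, (-1 : ℝ) ^ δ.card * (Z - Sr a δ) ^ (-(p : ℤ))
      with hF
    set F' : ℝ → ℝ := fun Z => ∑ δ ∈ s.powerset,
      (-1 : ℝ) ^ δ.card * (((-(p : ℤ) : ℤ) : ℝ) * (Z - Sr a δ) ^ (-(p : ℤ) - 1)) with hF'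
    have hposZ : ∀ Z ∈ Set.Icc (Y - (a k : ℝ)) Y, ∀ δ ∈ s.powerset, 0 < Z - Sr a δ := by
      intro Z hZ δ hδ
      have h1 : Sr a δ ≤ Sr a s := Sr_mono a (Finset.mem_powerset.mp hδ)
      have h2 := hZ.1
      linarith
    have hderiv : ∀ Z ∈ Set.Icc (Y - (a k : ℝ)) Y,
        HasDerivWithinAt F (F' Z) (Set.Icc (Y - (a k : ℝ)) Y) Z := by
      intro Z hZ
      apply HasDerivAt.hasDerivWithinAt
      apply HasDerivAt.fun_sum
      intro δ hδ
      have hpos := hposZ Z hZ δ hδ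
      have h1 : HasDerivAt (fun Z : ℝ => Z - Sr a δ) 1 Z := (hasDerivAt_id Z).sub_const _
      have h2 := hasDerivAt_zpow (-(p : ℤ)) (Z - Sr a δ) (Or.inl hpos.ne')
      have h3 := h2.comp Z h1
      simpa [mul_one] using h3.const_mul ((-1 : ℝ) ^ δ.card)
    set C : ℝ := (p : ℝ) * ((∏ j ∈ Finset.range s.card, (((p+1:ℕ) : ℝ) + j)) *
      (∏ i ∈ s, (a i : ℝ)) * (Y - Sr a (Finset.cons k s hk)) ^ (-(((p+1:ℕ) : ℤ) + s.card)))
      with hC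
    have hbound : ∀ Z ∈ Set.Icc (Y - (a k : ℝ)) Y, ‖F' Z‖ ≤ C := by
      intro Z hZ
      have hZs : Sr a s < Z := lt_of_lt_of_le hYs hZ.1
      have hrw : F' Z = (-(p : ℝ)) *
          ∑ δ ∈ s.powerset, (-1 : ℝ) ^ δ.card * (Z - Sr a δ) ^ (-((p+1:ℕ) : ℤ)) := by
        rw [hF', Finset.mul_sum]
        apply Finset.sum_congr rfl
        intro δ _
        have he : (-(p : ℤ) - 1) = -((p+1:ℕ) : ℤ) := by push_cast; ring
        rw [he]; push_cast; ring
      have hIH := ih (p+1) (by omega) Z hZs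
      have hmono : (Z - Sr a s) ^ (-(((p+1:ℕ) : ℤ) + s.card)) ≤
          (Y - Sr a (Finset.cons k s hk)) ^ (-(((p+1:ℕ) : ℤ) + s.card)) := by
        have h1 : 0 < Y - Sr a (Finset.cons k s hk) := by linarith [hY]
        have h2 : Y - Sr a (Finset.cons k s hk) ≤ Z - Sr a s := by
          rw [hScons]; have := hZ.1; linarith
        have := zpow_neg_anti h1 h2 ((p+1) + s.card)
        rwa [Nat.cast_add] at this
      rw [hrw, Real.norm_eq_abs, abs_mul, abs_neg, abs_of_nonneg (by positivity : (0:ℝ) ≤ (p:ℝ))]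
      rw [hC]
      have hprodnn : (0:ℝ) ≤ (∏ j ∈ Finset.range s.card, (((p+1:ℕ) : ℝ) + j)) *
          (∏ i ∈ s, (a i : ℝ)) := by positivity
      calc (p : ℝ) * |∑ δ ∈ s.powerset, (-1 : ℝ) ^ δ.card * (Z - Sr a δ) ^ (-((p+1:ℕ) : ℤ))|
          ≤ (p : ℝ) * ((∏ j ∈ Finset.range s.card, (((p+1:ℕ) : ℝ) + j)) *
              (∏ i ∈ s, (a i : ℝ)) * (Z - Sr a s) ^ (-(((p+1:ℕ) : ℤ) + s.card))) := by
            apply mul_le_mul_of_nonneg_left hIH (by positivity)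
        _ ≤ (p : ℝ) * ((∏ j ∈ Finset.range s.card, (((p+1:ℕ) : ℝ) + j)) *
              (∏ i ∈ s, (a i : ℝ)) * (Y - Sr a (Finset.cons k s hk)) ^
                (-(((p+1:ℕ) : ℤ) + s.card))) := by
            apply mul_le_mul_of_nonneg_left _ (by positivity)
            exact mul_le_mul_of_nonneg_left hmono hprodnn
    have hmem1 : Y - (a k : ℝ) ∈ Set.Icc (Y - (a k : ℝ)) Y := ⟨le_refl _, by linarith⟩
    have hmem2 : Y ∈ Set.Icc (Y - (a k : ℝ)) Y := ⟨by linarith, le_refl _⟩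
    have key := Convex.norm_image_sub_le_of_norm_hasDerivWithin_le hderiv hbound
      (convex_Icc _ _) hmem1 hmem2
    have hsplit : (∑ δ ∈ (Finset.cons k s hk).powerset,
        (-1 : ℝ) ^ δ.card * (Y - Sr a δ) ^ (-(p : ℤ))) = F Y - F (Y - (a k : ℝ)) := by
      rw [Finset.cons_eq_insert, Finset.sum_powerset_insert hk]
      have h2 : ∑ δ ∈ s.powerset, (-1 : ℝ) ^ (insert k δ).card *
          (Y - Sr a (insert k δ)) ^ (-(p : ℤ)) = - F (Y - (a k : ℝ)) := by
        rw [hF, ← Finset.sum_neg_distrib]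
        apply Finset.sum_congr rfl
        intro δ hδ
        have hkδ : k ∉ δ := fun h => hk (Finset.mem_powerset.mp hδ h)
        have hbase : Y - Sr a (insert k δ) = (Y - (a k : ℝ)) - Sr a δ := by
          have : Sr a (insert k δ) = (a k : ℝ) + Sr a δ := Finset.sum_insert hkδ
          rw [this]; ring
        rw [Finset.card_insert_of_notMem hkδ, hbase, pow_succ]
        ring
      rw [h2]; ring
    have hnorm : ‖Y - (Y - (a k : ℝ))‖ = (a k : ℝ) := by
      rw [Real.norm_eq_abs]
      rw [show Y - (Y - (a k : ℝ)) = (a k : ℝ) by ring, abs_of_nonneg hak]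
    rw [hsplit]
    calc |F Y - F (Y - (a k : ℝ))| ≤ C * ‖Y - (Y - (a k : ℝ))‖ := by
          simpa [Real.norm_eq_abs] using key
      _ = C * (a k : ℝ) := by rw [hnorm]
      _ = (∏ j ∈ Finset.range (Finset.cons k s hk).card, ((p : ℝ) + j)) *
            (∏ i ∈ Finset.cons k s hk, (a i : ℝ)) *
            (Y - Sr a (Finset.cons k s hk)) ^ (-((p : ℤ) + (Finset.cons k s hk).card)) := by
          rw [hC, Finset.card_cons, Finset.prod_cons]
          have hprod : ∏ j ∈ Finset.range (s.card + 1), ((p : ℝ) + j) =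
              (p : ℝ) * ∏ j ∈ Finset.range s.card, (((p+1:ℕ) : ℝ) + j) := by
            rw [Finset.prod_range_succ']
            have : ∀ j ∈ Finset.range s.card, ((p : ℝ) + ((j+1 : ℕ) : ℝ)) =
                (((p+1:ℕ) : ℝ) + j) := by intro j _; push_cast; ring
            rw [Finset.prod_congr rfl this]
            push_cast; ring
          have hexp : (-(((p+1:ℕ) : ℤ) + s.card)) = (-((p : ℤ) + ((s.card + 1 : ℕ) : ℤ))) := by
            push_cast; ring
          rw [hprod, hexp]
          ring

lemma log_sum_bound (a : Fin ℓ → ℕ) {k : Fin ℓ} {s : Finset (Fin ℓ)} (hk : k ∉ s)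
    (Y : ℝ) (hY : Sr a (insert k s) < Y) :
    |∑ δ ∈ (insert k s).powerset, (-1 : ℝ) ^ δ.card * Real.log (Y - Sr a δ)| ≤
      (∏ j ∈ Finset.range s.card, ((1 : ℝ) + j)) * (∏ i ∈ insert k s, (a i : ℝ)) *
        (Y - Sr a (insert k s)) ^ (-(1 + (s.card : ℤ))) := by
  have hSins : Sr a (insert k s) = (a k : ℝ) + Sr a s := Finset.sum_insert hk
  have hak : (0 : ℝ) ≤ (a k : ℝ) := by positivity
  have hYs : Sr a s < Y - (a k : ℝ) := by rw [hSins] at hY; linarith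
  set F : ℝ → ℝ := fun Z => ∑ δ ∈ s.powerset, (-1 : ℝ) ^ δ.card * Real.log (Z - Sr a δ)
    with hF
  set F' : ℝ → ℝ := fun Z => ∑ δ ∈ s.powerset, (-1 : ℝ) ^ δ.card * (Z - Sr a δ)⁻¹ with hF'
  have hposZ : ∀ Z ∈ Set.Icc (Y - (a k : ℝ)) Y, ∀ δ ∈ s.powerset, 0 < Z - Sr a δ := by
    intro Z hZ δ hδ
    have h1 : Sr a δ ≤ Sr a s := Sr_mono a (Finset.mem_powerset.mp hδ)
    have h2 := hZ.1
    linarith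
  have hderiv : ∀ Z ∈ Set.Icc (Y - (a k : ℝ)) Y,
      HasDerivWithinAt F (F' Z) (Set.Icc (Y - (a k : ℝ)) Y) Z := by
    intro Z hZ
    apply HasDerivAt.hasDerivWithinAt
    apply HasDerivAt.fun_sum
    intro δ hδ
    have hpos := hposZ Z hZ δ hδ
    have h1 : HasDerivAt (fun Z : ℝ => Z - Sr a δ) 1 Z := (hasDerivAt_id Z).sub_const _
    have h2 := Real.hasDerivAt_log hpos.ne'
    have h3 := h2.comp Z h1
    simpa [mul_one] using h3.const_mul ((-1 : ℝ) ^ δ.card)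
  set C : ℝ := (∏ j ∈ Finset.range s.card, ((1 : ℝ) + j)) * (∏ i ∈ s, (a i : ℝ)) *
    (Y - Sr a (insert k s)) ^ (-(1 + (s.card : ℤ))) with hC
  have hbound : ∀ Z ∈ Set.Icc (Y - (a k : ℝ)) Y, ‖F' Z‖ ≤ C := by
    intro Z hZ
    have hZs : Sr a s < Z := lt_of_lt_of_le hYs hZ.1
    have hIH := sum_inv_pow_bound a s 1 le_rfl Z hZs
    simp only [Nat.cast_one] at hIH
    have hrw : F' Z = ∑ δ ∈ s.powerset, (-1 : ℝ) ^ δ.card * (Z - Sr a δ) ^ (-(1 : ℤ)) := by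
      rw [hF']
      apply Finset.sum_congr rfl
      intro δ _
      rw [zpow_neg_one]
    have hmono : (Z - Sr a s) ^ (-(1 + (s.card : ℤ))) ≤
        (Y - Sr a (insert k s)) ^ (-(1 + (s.card : ℤ))) := by
      have h1 : 0 < Y - Sr a (insert k s) := by linarith
      have h2 : Y - Sr a (insert k s) ≤ Z - Sr a s := by
        rw [hSins]; have := hZ.1; linarith
      have := zpow_neg_anti h1 h2 (1 + s.card)
      rwa [Nat.cast_add, Nat.cast_one] at this
    rw [Real.norm_eq_abs, hrw, hC]
    calc |∑ δ ∈ s.powerset, (-1 : ℝ) ^ δ.card * (Z - Sr a δ) ^ (-(1 : ℤ))|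
        ≤ (∏ j ∈ Finset.range s.card, ((1 : ℝ) + j)) * (∏ i ∈ s, (a i : ℝ)) *
            (Z - Sr a s) ^ (-(1 + (s.card : ℤ))) := hIH
      _ ≤ (∏ j ∈ Finset.range s.card, ((1 : ℝ) + j)) * (∏ i ∈ s, (a i : ℝ)) *
            (Y - Sr a (insert k s)) ^ (-(1 + (s.card : ℤ))) := by
          apply mul_le_mul_of_nonneg_left hmono (by positivity)
  have hmem1 : Y - (a k : ℝ) ∈ Set.Icc (Y - (a k : ℝ)) Y := ⟨le_refl _, by linarith⟩
  have hmem2 : Y ∈ Set.Icc (Y - (a k : ℝ)) Y := ⟨by linarith, le_refl _⟩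
  have key := Convex.norm_image_sub_le_of_norm_hasDerivWithin_le hderiv hbound
    (convex_Icc _ _) hmem1 hmem2
  have hsplit : (∑ δ ∈ (insert k s).powerset,
      (-1 : ℝ) ^ δ.card * Real.log (Y - Sr a δ)) = F Y - F (Y - (a k : ℝ)) := by
    rw [Finset.sum_powerset_insert hk]
    have h2 : ∑ δ ∈ s.powerset, (-1 : ℝ) ^ (insert k δ).card *
        Real.log (Y - Sr a (insert k δ)) = - F (Y - (a k : ℝ)) := by
      rw [hF, ← Finset.sum_neg_distrib]
      apply Finset.sum_congr rfl
      intro δ hδ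
      have hkδ : k ∉ δ := fun h => hk (Finset.mem_powerset.mp hδ h)
      have hbase : Y - Sr a (insert k δ) = (Y - (a k : ℝ)) - Sr a δ := by
        have : Sr a (insert k δ) = (a k : ℝ) + Sr a δ := Finset.sum_insert hkδ
        rw [this]; ring
      rw [Finset.card_insert_of_notMem hkδ, hbase, pow_succ]
      ring
    rw [h2]; ring
  rw [hsplit]
  have hnorm : ‖Y - (Y - (a k : ℝ))‖ = (a k : ℝ) := by
    rw [Real.norm_eq_abs, show Y - (Y - (a k : ℝ)) = (a k : ℝ) by ring, abs_of_nonneg hak]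
  calc |F Y - F (Y - (a k : ℝ))| ≤ C * ‖Y - (Y - (a k : ℝ))‖ := by
        simpa [Real.norm_eq_abs] using key
    _ = C * (a k : ℝ) := by rw [hnorm]
    _ = (∏ j ∈ Finset.range s.card, ((1 : ℝ) + j)) * (∏ i ∈ insert k s, (a i : ℝ)) *
          (Y - Sr a (insert k s)) ^ (-(1 + (s.card : ℤ))) := by
        rw [hC, Finset.prod_insert hk]; ring

lemma prod_zpow_eq_exp (a : Fin ℓ → ℕ) (Δ : Finset (Fin ℓ)) (Y : ℝ)
    (h : ∀ δ ∈ Δ.powerset, 0 < Y - Sr a δ) :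
    ∏ δ ∈ Δ.powerset, (Y - Sr a δ) ^ ((-1 : ℤ) ^ δ.card) =
      Real.exp (∑ δ ∈ Δ.powerset, (-1 : ℝ) ^ δ.card * Real.log (Y - Sr a δ)) := by
  rw [Real.exp_sum]
  apply Finset.prod_congr rfl
  intro δ hδ
  have hp := h δ hδ
  rcases Nat.even_or_odd δ.card with he | ho
  · rw [he.neg_one_pow, he.neg_one_pow, zpow_one, one_mul, Real.exp_log hp]
  · rw [ho.neg_one_pow, ho.neg_one_pow, zpow_neg_one, neg_one_mul, Real.exp_neg,
      Real.exp_log hp]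

lemma prod_near_one : ∀ (N : ℕ) (f : ℕ → ℝ) (ε : ℝ), 0 ≤ ε → ε ≤ 1 →
    (∀ j < N, |f j - 1| ≤ ε) → |∏ j ∈ Finset.range N, f j - 1| ≤ ((2 : ℝ) ^ N - 1) * ε := by
  intro N
  induction N with
  | zero => intro f ε hε0 hε1 h; simp
  | succ n ih =>
    intro f ε hε0 hε1 h
    have h1 := ih f ε hε0 hε1 (fun j hj => h j (by omega))
    have h2 := h n (by omega)
    have hfn : |f n| ≤ 2 := by
      have := abs_sub_abs_le_abs_sub (f n) 1
      simp only [abs_one] at this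
      linarith
    have hP : |∏ j ∈ Finset.range n, f j - 1| * |f n| ≤ ((2 : ℝ) ^ n - 1) * ε * 2 := by
      apply mul_le_mul h1 hfn (abs_nonneg _)
      have : (1 : ℝ) ≤ 2 ^ n := one_le_pow₀ (by norm_num)
      exact mul_nonneg (by linarith) hε0
    rw [Finset.prod_range_succ]
    calc |(∏ j ∈ Finset.range n, f j) * f n - 1|
        = |(∏ j ∈ Finset.range n, f j - 1) * f n + (f n - 1)| := by ring_nf
      _ ≤ |(∏ j ∈ Finset.range n, f j - 1) * f n| + |f n - 1| := abs_add_le _ _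
      _ = |∏ j ∈ Finset.range n, f j - 1| * |f n| + |f n - 1| := by rw [abs_mul]
      _ ≤ ((2 : ℝ) ^ n - 1) * ε * 2 + ε := by linarith
      _ = ((2 : ℝ) ^ (n + 1) - 1) * ε := by ring

lemma factorial_prod_eq (a : Fin ℓ → ℕ) {k : Fin ℓ} {s : Finset (Fin ℓ)} (hk : k ∉ s)
    (X : ℕ) (hX : ∑ i ∈ insert k s, a i ≤ X) :
    ∏ δ ∈ (insert k s).powerset,
        ((Nat.factorial (X - ∑ i ∈ δ, a i) : ℝ)) ^ ((-1 : ℤ) ^ δ.card) =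
      ∏ j ∈ Finset.range (a k), ∏ δ ∈ s.powerset,
        ((X : ℝ) - (j : ℝ) - Sr a δ) ^ ((-1 : ℤ) ^ δ.card) := by
  rw [Finset.prod_powerset_insert hk, ← Finset.prod_mul_distrib, Finset.prod_comm]
  apply Finset.prod_congr rfl
  intro δ hδ
  have hδs := Finset.mem_powerset.mp hδ
  have hkδ : k ∉ δ := fun h => hk (hδs h)
  have hmono : ∑ i ∈ δ, a i ≤ ∑ i ∈ s, a i := Finset.sum_le_sum_of_subset hδs
  have hins : ∑ i ∈ insert k s, a i = a k + ∑ i ∈ s, a i := Finset.sum_insert hk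
  have hinsδ : ∑ i ∈ insert k δ, a i = a k + ∑ i ∈ δ, a i := Finset.sum_insert hkδ
  have hak_le : a k ≤ X - ∑ i ∈ δ, a i := by omega
  have h1 : X - ∑ i ∈ insert k δ, a i = (X - ∑ i ∈ δ, a i) - a k := by omega
  rw [h1, Finset.card_insert_of_notMem hkδ]
  set m := X - ∑ i ∈ δ, a i with hm
  set e : ℤ := (-1 : ℤ) ^ δ.card with he
  have hpow : (-1 : ℤ) ^ (δ.card + 1) = -e := by rw [he, pow_succ]; ring
  rw [hpow]
  have hfac : ((m.factorial : ℕ) : ℝ) =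
      ((m - a k).factorial : ℝ) * (m.descFactorial (a k) : ℝ) := by
    rw [← Nat.cast_mul, Nat.factorial_mul_descFactorial hak_le]
  have hne : (((m - a k).factorial : ℕ) : ℝ) ≠ 0 := by
    exact_mod_cast (Nat.factorial_pos _).ne'
  have step1 : ((m.factorial : ℕ) : ℝ) ^ e * (((m - a k).factorial : ℕ) : ℝ) ^ (-e) =
      ((m.descFactorial (a k) : ℕ) : ℝ) ^ e := by
    rw [hfac, mul_zpow, zpow_neg, mul_comm (((m - a k).factorial : ℝ) ^ e), mul_assoc,
      mul_inv_cancel₀ (zpow_ne_zero e hne), mul_one]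
  rw [step1, Nat.descFactorial_eq_prod_range, Nat.cast_prod, ← Finset.prod_zpow]
  apply Finset.prod_congr rfl
  intro j hj
  have hjlt : j < a k := Finset.mem_range.mp hj
  have hmj : m - j = X - (∑ i ∈ δ, a i + j) := by omega
  have hle : ∑ i ∈ δ, a i + j ≤ X := by omega
  rw [hmj, Nat.cast_sub hle]
  push_cast
  simp only [Sr]
  push_cast
  ring_nf

end QFhelper

open QFhelper

set_option maxHeartbeats 1000000 in
/-- The factorial sequences `u⁽ⁿ⁾_Δ = (X_n − Σ_{i∈Δ} a_i)!` have the
`1/X_n` quasi-factorization (small cumulant) property: for every `Δ` with `|Δ| ≥ 2`,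
`|P_Δ(u⁽ⁿ⁾) − 1| ≤ K_Δ · X_n^{−|Δ|+1}`. -/
theorem factorial_sequences_quasiFactorization
    (ℓ : ℕ) (hℓ : 1 ≤ ℓ) (X : ℕ → ℕ) (hX1 : ∀ n, 1 ≤ X n)
    (hXtop : Tendsto X atTop atTop)
    (a : Fin ℓ → ℕ) (n₀ : ℕ) (hn₀ : ∀ n, n₀ ≤ n → ∑ i, a i ≤ X n) :
    ∀ Δ : Finset (Fin ℓ), 2 ≤ Δ.card → ∃ K : ℝ, ∀ n, n₀ ≤ n →
      |(∏ δ ∈ Δ.powerset,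
          ((Nat.factorial (X n - ∑ i ∈ δ, a i) : ℝ)) ^ ((-1 : ℤ) ^ δ.card)) - 1|
        ≤ K * ((X n : ℝ)⁻¹) ^ (Δ.card - 1) := by
  classical
  intro Δ hd
  obtain ⟨k, hkΔ⟩ := Finset.card_pos.mp (show 0 < Δ.card by omega)
  set s : Finset (Fin ℓ) := Δ.erase k with hs_def
  have hk : k ∉ s := Finset.notMem_erase k Δ
  have hΔ : insert k s = Δ := Finset.insert_erase hkΔ
  have hscard : s.card = Δ.card - 1 := Finset.card_erase_of_mem hkΔ
  have hspos : 1 ≤ s.card := by omega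
  obtain ⟨k', hk's⟩ := Finset.card_pos.mp (show 0 < s.card by omega)
  set s' : Finset (Fin ℓ) := s.erase k' with hs'_def
  have hk' : k' ∉ s' := Finset.notMem_erase k' s
  have hs : insert k' s' = s := Finset.insert_erase hk's
  have hs'card : s'.card = s.card - 1 := Finset.card_erase_of_mem hk's
  have hdl : Δ.card ≤ ℓ := by
    have := Finset.card_le_univ Δ
    simpa using this
  have hml : s.card ≤ ℓ := by omega
  set Atot : ℕ := ∑ i, a i with hAtot_def
  set Ca : ℝ := (Nat.factorial ℓ : ℝ) * ∏ i, ((a i : ℝ) + 1) with hCa_def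
  have hCa1 : (1 : ℝ) ≤ Ca := by
    rw [hCa_def]
    have h1 : (1 : ℝ) ≤ (Nat.factorial ℓ : ℝ) := by
      exact_mod_cast (Nat.factorial_pos ℓ)
    have h2 : (1 : ℝ) ≤ ∏ i, ((a i : ℝ) + 1) := by
      calc (1 : ℝ) = ∏ _i : Fin ℓ, (1 : ℝ) := Finset.prod_const_one.symm
        _ ≤ ∏ i, ((a i : ℝ) + 1) :=
            Finset.prod_le_prod (fun i _ => by norm_num) (fun i _ => le_add_of_nonneg_left (by positivity))
    nlinarith
  have hBA : (∏ j ∈ Finset.range s'.card, ((1 : ℝ) + j)) * (∏ i ∈ s, (a i : ℝ)) ≤ Ca := by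
    have h1 : (∏ j ∈ Finset.range s'.card, ((1 : ℝ) + j)) = (Nat.factorial s'.card : ℝ) := by
      rw [← Finset.prod_range_add_one_eq_factorial]
      push_cast
      exact Finset.prod_congr rfl (fun j _ => by ring)
    have h2 : (Nat.factorial s'.card : ℝ) ≤ (Nat.factorial ℓ : ℝ) := by
      exact_mod_cast Nat.factorial_le (by omega)
    have h3 : (∏ i ∈ s, (a i : ℝ)) ≤ ∏ i, ((a i : ℝ) + 1) := by
      calc (∏ i ∈ s, (a i : ℝ)) ≤ ∏ i ∈ s, ((a i : ℝ) + 1) :=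
            Finset.prod_le_prod (fun i _ => by positivity) (fun i _ => by linarith)
        _ ≤ ∏ i, ((a i : ℝ) + 1) := by
            rw [← Finset.prod_mul_prod_compl s (fun i => ((a i : ℝ) + 1))]
            have hnn : (0:ℝ) ≤ ∏ i ∈ s, ((a i : ℝ) + 1) :=
              Finset.prod_nonneg (fun i _ => by positivity)
            have h1le : (1:ℝ) ≤ ∏ i ∈ sᶜ, ((a i : ℝ) + 1) := by
              calc (1 : ℝ) = ∏ _i ∈ sᶜ, (1 : ℝ) := Finset.prod_const_one.symm
                _ ≤ ∏ i ∈ sᶜ, ((a i : ℝ) + 1) :=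
                    Finset.prod_le_prod (fun i _ => by norm_num) (fun i _ => le_add_of_nonneg_left (by positivity))
            exact le_mul_of_one_le_right hnn h1le
    rw [h1, hCa_def]
    have h4 : (0 : ℝ) ≤ (∏ i ∈ s, (a i : ℝ)) := Finset.prod_nonneg (fun i _ => by positivity)
    exact mul_le_mul h2 h3 h4 (by positivity)
  set Cb : ℝ := Ca * 2 ^ (ℓ + 1) with hCb_def
  have hCb1 : (1 : ℝ) ≤ Cb := by
    rw [hCb_def]
    have : (1 : ℝ) ≤ 2 ^ (ℓ + 1) := one_le_pow₀ (by norm_num)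
    nlinarith
  set Y₀ : ℝ := 2 * (Atot : ℝ) + 2 * Cb + 2 with hY₀_def
  set N₁ : ℕ := ⌈Y₀⌉₊ with hN₁_def
  set K1 : ℝ := 2 ^ Atot * (2 * (Ca * 2 ^ ℓ)) with hK1_def
  set K2 : ℝ := ((N₁.factorial : ℝ) ^ (2 ^ ℓ) + 1) * (N₁ : ℝ) ^ ℓ with hK2_def
  have hK1nn : 0 ≤ K1 := by rw [hK1_def]; positivity
  have hK2nn : 0 ≤ K2 := by rw [hK2_def]; positivity
  refine ⟨K1 + K2, ?_⟩
  intro n hn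
  set Y : ℝ := (X n : ℝ) with hY_def
  have hY1 : (1 : ℝ) ≤ Y := by rw [hY_def]; exact_mod_cast hX1 n
  have hYpos : (0 : ℝ) < Y := by linarith
  have hYA : (Atot : ℝ) ≤ Y := by rw [hY_def, hAtot_def]; exact_mod_cast hn₀ n hn
  have hSr_le : ∀ t : Finset (Fin ℓ), Sr a t ≤ (Atot : ℝ) := by
    intro t
    have h1 := Sr_mono a (Finset.subset_univ t)
    have h2 : Sr a Finset.univ = (Atot : ℝ) := by
      rw [hAtot_def, Sr]; push_cast; rfl
    linarith
  have hak_le : a k ≤ Atot := by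
    rw [hAtot_def]
    exact Finset.single_le_sum (f := a) (fun i _ => Nat.zero_le _) (Finset.mem_univ k)
  have hinv1 : Y⁻¹ ≤ 1 := by
    rw [inv_le_one_iff₀]; right; exact hY1
  have hinvnn : (0 : ℝ) ≤ Y⁻¹ := by positivity
  set mm : ℕ := s.card with hmm_def
  have htarget : Δ.card - 1 = mm := hscard.symm
  rw [htarget]
  by_cases hbig : Y₀ ≤ Y
  · -- main (large X) case
    have hCbY : Cb ≤ Y := by
      have h0 : (0 : ℝ) ≤ (Atot : ℝ) := by positivity
      rw [hY₀_def] at hbig; linarith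
    have hXsum : ∑ i ∈ insert k s, a i ≤ X n := by
      have h1 : ∑ i ∈ insert k s, a i ≤ Atot := by
        rw [hAtot_def]
        exact Finset.sum_le_sum_of_subset (Finset.subset_univ _)
      have := hn₀ n hn
      rw [hAtot_def] at h1
      omega
    have hPeq := factorial_prod_eq a hk (X n) hXsum
    rw [hΔ] at hPeq
    rw [← hY_def] at hPeq
    rw [hPeq]
    set f : ℕ → ℝ := fun j => ∏ δ ∈ s.powerset,
      (Y - (j : ℝ) - Sr a δ) ^ ((-1 : ℤ) ^ δ.card) with hf_def
    set ε : ℝ := 2 * (Ca * 2 ^ ℓ) * (Y⁻¹) ^ mm with hε_def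
    have hpow_inv : (Y⁻¹) ^ mm ≤ Y⁻¹ := by
      calc (Y⁻¹) ^ mm ≤ (Y⁻¹) ^ 1 := pow_le_pow_of_le_one hinvnn hinv1 (by omega)
        _ = Y⁻¹ := pow_one _
    have hhalf : Ca * 2 ^ ℓ * (Y⁻¹) ^ mm ≤ 1 / 2 := by
      have h2 : Ca * 2 ^ ℓ * (Y⁻¹) ^ mm ≤ Ca * 2 ^ ℓ * Y⁻¹ :=
        mul_le_mul_of_nonneg_left hpow_inv (by positivity)
      have h5 : 2 * (Ca * 2 ^ ℓ) ≤ Y := by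
        have he : Ca * 2 ^ (ℓ + 1) = 2 * (Ca * 2 ^ ℓ) := by ring
        rw [hCb_def, he] at hCbY
        exact hCbY
      have h3 : Ca * 2 ^ ℓ * Y⁻¹ ≤ 1 / 2 := by
        rw [← div_eq_mul_inv, div_le_iff₀ hYpos]
        linarith
      linarith
    have hAhalf : (Atot : ℝ) ≤ Y / 2 := by
      rw [hY₀_def] at hbig; linarith
    have hSrΔ : Sr a Δ = (a k : ℝ) + Sr a s := by
      rw [← hΔ, Sr, Finset.sum_insert hk]; rfl
    have hkey : ∀ j < a k, |f j - 1| ≤ ε := by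
      intro j hj
      have hjA : (j : ℝ) + 1 ≤ (a k : ℝ) := by exact_mod_cast hj
      have hSrΔA : Sr a Δ ≤ (Atot : ℝ) := hSr_le Δ
      have hZs : Y / 2 ≤ Y - (j : ℝ) - Sr a s := by
        rw [hSrΔ] at hSrΔA
        linarith
      have hYhalfpos : (0 : ℝ) < Y / 2 := by linarith
      have hZspos : Sr a s < Y - (j : ℝ) := by
        have h0 := Sr_mono a (Finset.subset_univ s)
        linarith
      have hZins : Sr a (insert k' s') < Y - (j : ℝ) := by rw [hs]; exact hZspos
      have hlog := log_sum_bound a hk' (Y - (j : ℝ)) hZins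
      rw [hs] at hlog
      have hcard' : s'.card + 1 = mm := by omega
      have hexp_eq : (-(1 + (s'.card : ℤ))) = -(mm : ℤ) := by
        rw [← hcard']; push_cast; ring
      rw [hexp_eq] at hlog
      have hmono : (Y - (j : ℝ) - Sr a s) ^ (-(mm : ℤ)) ≤ (Y / 2) ^ (-(mm : ℤ)) :=
        zpow_neg_anti hYhalfpos hZs mm
      have hiden : (Y / 2) ^ (-(mm : ℤ)) = 2 ^ mm * (Y⁻¹) ^ mm := by
        rw [zpow_neg, zpow_natCast, div_pow, inv_div, div_eq_mul_inv, ← inv_pow]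
      have hL : |∑ δ ∈ s.powerset, (-1 : ℝ) ^ δ.card * Real.log (Y - (j : ℝ) - Sr a δ)| ≤
          Ca * 2 ^ ℓ * (Y⁻¹) ^ mm := by
        have hzp_nn : (0 : ℝ) ≤ (Y - (j : ℝ) - Sr a s) ^ (-(mm : ℤ)) :=
          le_of_lt (zpow_pos (by linarith) _)
        calc |∑ δ ∈ s.powerset, (-1 : ℝ) ^ δ.card * Real.log (Y - (j : ℝ) - Sr a δ)|
            ≤ (∏ j ∈ Finset.range s'.card, ((1 : ℝ) + j)) * (∏ i ∈ s, (a i : ℝ)) *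
              (Y - (j : ℝ) - Sr a s) ^ (-(mm : ℤ)) := hlog
          _ ≤ Ca * (Y / 2) ^ (-(mm : ℤ)) := by
              apply mul_le_mul hBA hmono hzp_nn (by linarith)
          _ = Ca * 2 ^ mm * (Y⁻¹) ^ mm := by rw [hiden]; ring
          _ ≤ Ca * 2 ^ ℓ * (Y⁻¹) ^ mm := by
              have h2 : (2 : ℝ) ^ mm ≤ 2 ^ ℓ := pow_le_pow_right₀ one_le_two hml
              have hca0 : (0 : ℝ) ≤ Ca := by linarith
              have := mul_le_mul_of_nonneg_left h2 hca0
              exact mul_le_mul_of_nonneg_right this (pow_nonneg hinvnn mm)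
      have hL1 : |∑ δ ∈ s.powerset, (-1 : ℝ) ^ δ.card * Real.log (Y - (j : ℝ) - Sr a δ)| ≤ 1 :=
        le_trans hL (le_trans hhalf (by norm_num))
      have hfj : f j = Real.exp
          (∑ δ ∈ s.powerset, (-1 : ℝ) ^ δ.card * Real.log (Y - (j : ℝ) - Sr a δ)) := by
        rw [hf_def]
        refine prod_zpow_eq_exp a s (Y - (j : ℝ)) (fun δ hδ => ?_)
        have := Sr_mono a (Finset.mem_powerset.mp hδ)
        linarith
      rw [hfj]
      calc |Real.exp (∑ δ ∈ s.powerset, (-1 : ℝ) ^ δ.card *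
              Real.log (Y - (j : ℝ) - Sr a δ)) - 1|
          ≤ 2 * |∑ δ ∈ s.powerset, (-1 : ℝ) ^ δ.card * Real.log (Y - (j : ℝ) - Sr a δ)| :=
            Real.abs_exp_sub_one_le hL1
        _ ≤ 2 * (Ca * 2 ^ ℓ * (Y⁻¹) ^ mm) := by linarith
        _ = ε := by rw [hε_def]; ring
    have hε0 : 0 ≤ ε := by rw [hε_def]; positivity
    have hε1 : ε ≤ 1 := by
      rw [hε_def]
      have := hhalf
      linarith
    have hprod := prod_near_one (a k) f ε hε0 hε1 hkey
    calc |∏ j ∈ Finset.range (a k), f j - 1| ≤ ((2 : ℝ) ^ (a k) - 1) * ε := hprod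
      _ ≤ 2 ^ Atot * ε := by
          have h1 : (2 : ℝ) ^ (a k) ≤ 2 ^ Atot := pow_le_pow_right₀ one_le_two hak_le
          nlinarith
      _ = K1 * (Y⁻¹) ^ mm := by rw [hK1_def, hε_def]; ring
      _ ≤ (K1 + K2) * (Y⁻¹) ^ mm :=
          mul_le_mul_of_nonneg_right (by linarith) (pow_nonneg hinvnn mm)
  · -- small X case
    have hYlt : Y < Y₀ := not_le.mp hbig
    have hYN : Y ≤ (N₁ : ℝ) := by
      have h1 : Y₀ ≤ (N₁ : ℝ) := Nat.le_ceil Y₀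
      linarith
    have hXN : X n ≤ N₁ := by rw [hY_def] at hYN; exact_mod_cast hYN
    have hfacN : (1 : ℝ) ≤ (N₁.factorial : ℝ) := by exact_mod_cast (Nat.factorial_pos N₁)
    have hterm : ∀ δ ∈ Δ.powerset,
        ((Nat.factorial (X n - ∑ i ∈ δ, a i) : ℝ)) ^ ((-1 : ℤ) ^ δ.card) ≤
          (N₁.factorial : ℝ) := by
      intro δ _
      rcases Nat.even_or_odd δ.card with he | ho
      · rw [he.neg_one_pow, zpow_one]
        have : X n - ∑ i ∈ δ, a i ≤ N₁ := le_trans (Nat.sub_le _ _) hXN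
        exact_mod_cast Nat.factorial_le this
      · rw [ho.neg_one_pow, zpow_neg_one]
        have h1 : (1 : ℝ) ≤ (Nat.factorial (X n - ∑ i ∈ δ, a i) : ℝ) := by
          exact_mod_cast (Nat.factorial_pos _)
        calc ((Nat.factorial (X n - ∑ i ∈ δ, a i) : ℝ))⁻¹ ≤ 1 := inv_le_one_of_one_le₀ h1
          _ ≤ (N₁.factorial : ℝ) := hfacN
    have hPnn : (0 : ℝ) ≤ ∏ δ ∈ Δ.powerset,
        ((Nat.factorial (X n - ∑ i ∈ δ, a i) : ℝ)) ^ ((-1 : ℤ) ^ δ.card) :=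
      Finset.prod_nonneg (fun δ _ => zpow_nonneg (by positivity) _)
    have hPle : (∏ δ ∈ Δ.powerset,
        ((Nat.factorial (X n - ∑ i ∈ δ, a i) : ℝ)) ^ ((-1 : ℤ) ^ δ.card)) ≤
          (N₁.factorial : ℝ) ^ (2 ^ ℓ) := by
      calc (∏ δ ∈ Δ.powerset, ((Nat.factorial (X n - ∑ i ∈ δ, a i) : ℝ)) ^ ((-1 : ℤ) ^ δ.card))
          ≤ ∏ _δ ∈ Δ.powerset, (N₁.factorial : ℝ) :=
            Finset.prod_le_prod (fun δ _ => zpow_nonneg (by positivity) _) hterm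
        _ = (N₁.factorial : ℝ) ^ Δ.powerset.card := Finset.prod_const _
        _ = (N₁.factorial : ℝ) ^ (2 ^ Δ.card) := by rw [Finset.card_powerset]
        _ ≤ (N₁.factorial : ℝ) ^ (2 ^ ℓ) :=
            pow_le_pow_right₀ hfacN (Nat.pow_le_pow_right (by norm_num) hdl)
    have habs : |(∏ δ ∈ Δ.powerset,
        ((Nat.factorial (X n - ∑ i ∈ δ, a i) : ℝ)) ^ ((-1 : ℤ) ^ δ.card)) - 1| ≤
          (N₁.factorial : ℝ) ^ (2 ^ ℓ) + 1 := by
      rw [abs_le]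
      constructor
      · have : (0 : ℝ) ≤ (N₁.factorial : ℝ) ^ (2 ^ ℓ) := by positivity
        nlinarith
      · linarith
    have hN1pos : (0 : ℝ) < (N₁ : ℝ) := by linarith
    have hone : (1 : ℝ) ≤ (N₁ : ℝ) ^ ℓ * (Y⁻¹) ^ mm := by
      have h1 : ((N₁ : ℝ))⁻¹ ≤ Y⁻¹ := inv_anti₀ hYpos hYN
      have h2 : ((N₁ : ℝ)⁻¹) ^ mm ≤ (Y⁻¹) ^ mm := pow_le_pow_left₀ (by positivity) h1 mm
      have hN1inv : ((N₁ : ℝ))⁻¹ ≤ 1 := by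
        rw [inv_le_one_iff₀]; right; linarith
      have h3 : ((N₁ : ℝ)⁻¹) ^ ℓ ≤ ((N₁ : ℝ)⁻¹) ^ mm :=
        pow_le_pow_of_le_one (by positivity) hN1inv hml
      have h4 : (N₁ : ℝ) ^ ℓ * ((N₁ : ℝ)⁻¹) ^ ℓ = 1 := by
        rw [← mul_pow, mul_inv_cancel₀ (by linarith : (N₁ : ℝ) ≠ 0), one_pow]
      calc (1 : ℝ) = (N₁ : ℝ) ^ ℓ * ((N₁ : ℝ)⁻¹) ^ ℓ := h4.symm
        _ ≤ (N₁ : ℝ) ^ ℓ * (Y⁻¹) ^ mm := by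
            apply mul_le_mul_of_nonneg_left (le_trans h3 h2) (by positivity)
    calc |(∏ δ ∈ Δ.powerset,
          ((Nat.factorial (X n - ∑ i ∈ δ, a i) : ℝ)) ^ ((-1 : ℤ) ^ δ.card)) - 1|
        ≤ (N₁.factorial : ℝ) ^ (2 ^ ℓ) + 1 := habs
      _ = ((N₁.factorial : ℝ) ^ (2 ^ ℓ) + 1) * 1 := by ring
      _ ≤ ((N₁.factorial : ℝ) ^ (2 ^ ℓ) + 1) * ((N₁ : ℝ) ^ ℓ * (Y⁻¹) ^ mm) := by
          apply mul_le_mul_of_nonneg_left hone (by positivity)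
      _ = K2 * (Y⁻¹) ^ mm := by rw [hK2_def]; ring
      _ ≤ (K1 + K2) * (Y⁻¹) ^ mm :=
          mul_le_mul_of_nonneg_right (by linarith) (pow_nonneg hinvnn mm)
end
end
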